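/- arXiv:2411.11522 — 4 statements merged into one kernel-verified Lean document; each statement's English description precedes it below -/
import Mathlib

section
/- Let (D_1,…,D_N,Z) and (D_1',…,D_N',Z') be stochastically increasing Bernoulli mixture models with the same default probabilities π_1,…,π_N ∈ [0,1]. Let δ_1,…,δ_N be independent nonnegative integrable random variables that are also independent of both default models, and let e_1,…,e_N be positive constants. If G_{D_n,Z}(s) ≥ G_{D_n',Z'}(s) for all n ∈ {1,…,N} and all s ∈ [0,1], then Σ_{n=1}^N e_n δ_n D_n ≤_cx Σ_{n=1}^N e_n δ_n D_n'. -/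
open MeasureTheory ProbabilityTheory Set

noncomputable section

variable {Ω : Type*} [MeasurableSpace Ω]

/-- The measure `P` is atomless: every non-null measurable set contains a measurable
subset of strictly smaller positive measure. -/
def MeasureAtomless (P : Measure Ω) : Prop :=
  ∀ s : Set Ω, MeasurableSet s → P s ≠ 0 →
    ∃ t ⊆ s, MeasurableSet t ∧ 0 < P t ∧ P t < P s

/-- Distribution function `F_Z` of a real random variable `Z` under `P`. -/
def distFun (P : Measure Ω) (Z : Ω → ℝ) (z : ℝ) : ℝ :=
  (P {ω | Z ω ≤ z}).toReal

/-- Generalized inverse `F⁻¹(t) = inf {x | t ≤ F x}`. -/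
def qinv (F : ℝ → ℝ) (t : ℝ) : ℝ :=
  sInf {x : ℝ | t ≤ F x}

/-- Bernoulli mixture model `(D₁,…,D_N, Z)` with default probabilities `π` and
(fixed versions of) conditional default probability functions `p n`:
each `Dₙ` is `{0,1}`-valued with `P(Dₙ = 1) = πₙ`, `pₙ` is a version of the conditional
probability `P(Dₙ = 1 | Z = ·)`, and `D₁,…,D_N` are conditionally independent given `Z`. -/
structure IsBMM (P : Measure Ω) {N : ℕ} (D : Fin N → Ω → ℝ) (Z : Ω → ℝ)
    (π : Fin N → ℝ) (p : Fin N → ℝ → ℝ) : Prop where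
  measD : ∀ n, Measurable (D n)
  measZ : Measurable Z
  measp : ∀ n, Measurable (p n)
  values : ∀ n ω, D n ω = 0 ∨ D n ω = 1
  pi_mem : ∀ n, π n ∈ Icc (0:ℝ) 1
  prob : ∀ n, P {ω | D n ω = 1} = ENNReal.ofReal (π n)
  p_mem : ∀ n z, p n z ∈ Icc (0:ℝ) 1
  condVersion : ∀ n (B : Set ℝ), MeasurableSet B →
    P ({ω | D n ω = 1} ∩ Z ⁻¹' B) = ENNReal.ofReal (∫ z in B, p n z ∂(P.map Z))
  condIndep : ∀ (d : Fin N → Bool) (B : Set ℝ), MeasurableSet B →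
    P ((⋂ n, {ω | D n ω = (if d n then (1:ℝ) else 0)}) ∩ Z ⁻¹' B)
      = ENNReal.ofReal (∫ z in B, ∏ n, (if d n then p n z else 1 - p n z) ∂(P.map Z))

/-- Stochastically increasing Bernoulli mixture model: a BMM in which every
conditional default probability function `pₙ` is increasing. -/
structure IsSIBMM (P : Measure Ω) {N : ℕ} (D : Fin N → Ω → ℝ) (Z : Ω → ℝ)
    (π : Fin N → ℝ) (p : Fin N → ℝ → ℝ) extends IsBMM P D Z π p : Prop where
  mono : ∀ n, Monotone (p n)

/-- The default integral function `G_{D,Z}(s) = ∫_0^s p(F_Z^{-1}(t)) dt`. -/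
def defaultIntegral (P : Measure Ω) (Z : Ω → ℝ) (p : ℝ → ℝ) (s : ℝ) : ℝ :=
  ∫ t in (0:ℝ)..s, p (qinv (distFun P Z) t)

/-- Convex order of (nonnegative, integrable) random variables: `E[φ(X)] ≤ E[φ(Y)]`
for every convex `φ : [0,∞) → ℝ` such that both expectations exist. -/
def ConvexOrder (P : Measure Ω) (X Y : Ω → ℝ) : Prop :=
  ∀ φ : ℝ → ℝ, ConvexOn ℝ (Ici (0:ℝ)) φ →
    Integrable (fun ω => φ (X ω)) P → Integrable (fun ω => φ (Y ω)) P →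
    ∫ ω, φ (X ω) ∂P ≤ ∫ ω, φ (Y ω) ∂P

/-- `X₁,…,X_N` are conditionally independent given `Y`: there are (versions of the)
conditional distribution functions `qₙ(x, ·)` of `Xₙ` given `Y` whose product is a version
of the conditional joint distribution function. -/
def CondIndepGiven (P : Measure Ω) {N : ℕ} (X : Fin N → Ω → ℝ) (Y : Ω → ℝ) : Prop :=
  ∃ q : Fin N → ℝ → ℝ → ℝ,
    (∀ n x, Measurable (q n x)) ∧
    (∀ n x y, q n x y ∈ Icc (0:ℝ) 1) ∧
    (∀ n (x : ℝ) (B : Set ℝ), MeasurableSet B →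
      P ({ω | X n ω ≤ x} ∩ Y ⁻¹' B) = ENNReal.ofReal (∫ y in B, q n x y ∂(P.map Y))) ∧
    (∀ (x : Fin N → ℝ) (B : Set ℝ), MeasurableSet B →
      P ((⋂ n, {ω | X n ω ≤ x n}) ∩ Y ⁻¹' B)
        = ENNReal.ofReal (∫ y in B, ∏ n, q n (x n) y ∂(P.map Y)))

/-- Bivariate copula: 2-increasing with the usual boundary conditions. -/
def IsCopula (C : ℝ → ℝ → ℝ) : Prop :=
  (∀ u ∈ Icc (0:ℝ) 1, C u 0 = 0 ∧ C u 1 = u) ∧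
  (∀ v ∈ Icc (0:ℝ) 1, C 0 v = 0 ∧ C 1 v = v) ∧
  (∀ u₁ u₂ v₁ v₂ : ℝ, u₁ ∈ Icc (0:ℝ) 1 → u₂ ∈ Icc (0:ℝ) 1 →
    v₁ ∈ Icc (0:ℝ) 1 → v₂ ∈ Icc (0:ℝ) 1 → u₁ ≤ u₂ → v₁ ≤ v₂ →
    0 ≤ C u₂ v₂ - C u₁ v₂ - C u₂ v₁ + C u₁ v₁)

/-- A copula is stochastically increasing (SI) iff `v ↦ C(u,v)` is concave for every `u`. -/
def IsSI (C : ℝ → ℝ → ℝ) : Prop :=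
  ∀ u ∈ Icc (0:ℝ) 1, ConcaveOn ℝ (Icc (0:ℝ) 1) (fun v => C u v)

/-- Partial derivative `∂₂C(u,v)` of a copula w.r.t. its second argument
(the conditional distribution function `C(u|v)`). -/
def copDeriv₂ (C : ℝ → ℝ → ℝ) (u v : ℝ) : ℝ := deriv (fun w => C u w) v

/-- Generalized inverse `C^{-1}(t|v) = inf {u ∈ [0,1] | ∂₂C(u,v) ≥ t}`. -/
def condInv (C : ℝ → ℝ → ℝ) (t v : ℝ) : ℝ :=
  sInf {u : ℝ | u ∈ Icc (0:ℝ) 1 ∧ t ≤ copDeriv₂ C u v}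

/-- Survival copula `Ĉ(u,v) = u + v − 1 + C(1−u, 1−v)`. -/
def survCop (C : ℝ → ℝ → ℝ) (u v : ℝ) : ℝ :=
  u + v - 1 + C (1 - u) (1 - v)

/-- `U` is uniformly distributed on `(0,1)` under `P`. -/
def IsUniform01 (P : Measure Ω) (U : Ω → ℝ) : Prop :=
  ∀ x ∈ Icc (0:ℝ) 1, P {ω | U ω ≤ x} = ENNReal.ofReal x

/-- The Clayton copula with parameter `θ > 0`. -/
def clayton (θ : ℝ) (u v : ℝ) : ℝ :=
  if u = 0 ∨ v = 0 then 0
  else (u ^ (-θ) + v ^ (-θ) - 1) ^ (-1 / θ)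

/-- `g` is the increasing rearrangement of `f` on `(0,1)`. -/
def IsIncreasingRearrangement (f g : ℝ → ℝ) : Prop :=
  MonotoneOn g (Ioo (0:ℝ) 1) ∧
  (∀ x ∈ Ioo (0:ℝ) 1, (∫ t in x..(1:ℝ), f t) ≤ ∫ t in x..(1:ℝ), g t) ∧
  (∫ t in (0:ℝ)..(1:ℝ), f t) = ∫ t in (0:ℝ)..(1:ℝ), g t

end


open Filter
noncomputable section
namespace Stmt0Aux


variable {φ : ℝ → ℝ}

lemma convSM (hφ : ConvexOn ℝ (Ici (0:ℝ)) φ) {s a b : ℝ} (hs : 0 ≤ s) (ha : 0 ≤ a)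
    (hb : 0 ≤ b) : φ (s+a) + φ (s+b) ≤ φ s + φ (s+a+b) := by
  rcases eq_or_lt_of_le (by positivity : (0:ℝ) ≤ a + b) with h | h
  · have ha0 : a = 0 := by linarith [ha, hb]
    have hb0 : b = 0 := by linarith
    subst ha0; subst hb0; simp
  · have hmem1 : s ∈ Ici (0:ℝ) := hs
    have hmem2 : s + a + b ∈ Ici (0:ℝ) := by simp [Ici]; linarith
    have hba : 0 ≤ b / (a+b) := by positivity
    have hab : 0 ≤ a / (a+b) := by positivity
    have hsum : b / (a+b) + a / (a+b) = 1 := by field_simp; ring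
    have hsum' : a / (a+b) + b / (a+b) = 1 := by field_simp
    have h1 := hφ.2 hmem1 hmem2 hba hab hsum
    have h2 := hφ.2 hmem1 hmem2 hab hba hsum'
    simp only [smul_eq_mul] at h1 h2
    have e1 : b/(a+b) * s + a/(a+b) * (s+a+b) = s + a := by
      field_simp; ring
    have e2 : a/(a+b) * s + b/(a+b) * (s+a+b) = s + b := by
      field_simp; ring
    rw [e1] at h1; rw [e2] at h2
    have h3 : b/(a+b) * φ s + a/(a+b) * φ (s+a+b) + (a/(a+b) * φ s + b/(a+b) * φ (s+a+b))
        = φ s + φ (s+a+b) := by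
      calc b/(a+b) * φ s + a/(a+b) * φ (s+a+b) + (a/(a+b) * φ s + b/(a+b) * φ (s+a+b))
          = (b/(a+b) + a/(a+b)) * φ s + (b/(a+b) + a/(a+b)) * φ (s+a+b) := by ring
        _ = φ s + φ (s+a+b) := by rw [hsum]; ring
    linarith

lemma convUpper (hφ : ConvexOn ℝ (Ici (0:ℝ)) φ) {y x : ℝ} (hy : 0 ≤ y) (hyx : y ≤ x) :
    φ y ≤ max (φ 0) (φ x) := by
  rcases eq_or_lt_of_le (hy.trans hyx) with h | hx
  · have : y = 0 := le_antisymm (hyx.trans h.symm.le) hy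
    simp [this]
  · have hmem1 : (0:ℝ) ∈ Ici (0:ℝ) := self_mem_Ici
    have hmem2 : x ∈ Ici (0:ℝ) := hx.le
    have h1 : 0 ≤ 1 - y/x := by
      have : y/x ≤ 1 := (div_le_one hx).mpr hyx
      linarith
    have h2 : 0 ≤ y/x := by positivity
    have h3 : (1 - y/x) + y/x = 1 := by ring
    have := hφ.2 hmem1 hmem2 h1 h2 h3
    simp only [smul_eq_mul] at this
    have e : (1 - y/x) * (0:ℝ) + (y/x) * x = y := by field_simp; ring
    rw [e] at this
    calc φ y ≤ (1 - y/x) * φ 0 + (y/x) * φ x := this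
    _ ≤ (1 - y/x) * max (φ 0) (φ x) + (y/x) * max (φ 0) (φ x) := by
        gcongr <;> [exact le_max_left _ _; exact le_max_right _ _]
    _ = max (φ 0) (φ x) := by ring

set_option maxHeartbeats 1000000 in
lemma convLower (hφ : ConvexOn ℝ (Ici (0:ℝ)) φ) {y x : ℝ} (hy : 0 ≤ y) (hyx : y ≤ x) :
    -(2*(|φ 0| + |φ 1| + |φ 2|)) * (1 + x) ≤ φ y := by
  set K := 2*(|φ 0| + |φ 1| + |φ 2|) with hK
  have hK0 : 0 ≤ K := by positivity
  have hx1 : 0 ≤ 1 + x := by linarith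
  rcases le_or_gt y 1 with h1 | h1
  · -- 1 = θ y + (1-θ) 2, θ = 1/(2-y)
    have h2y : (0:ℝ) < 2 - y := by linarith
    have hθ1 : 0 ≤ 1/(2-y) := by positivity
    have hθ2 : 0 ≤ 1 - 1/(2-y) := by
      have : 1/(2-y) ≤ 1 := by
        rw [div_le_one h2y]; linarith
      linarith
    have hsum : 1/(2-y) + (1 - 1/(2-y)) = 1 := by ring
    have := hφ.2 (show y ∈ Ici (0:ℝ) from hy) (show (2:ℝ) ∈ Ici (0:ℝ) by norm_num) hθ1 hθ2 hsum
    simp only [smul_eq_mul] at this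
    have e : (1/(2-y)) * y + (1 - 1/(2-y)) * (2:ℝ) = 1 := by
      field_simp; ring
    rw [e] at this
    -- φ 1 ≤ θ φ y + (1-θ) φ 2 ⇒ φ y ≥ (φ 1 - (1-θ) φ 2)/θ
    have hφy : (2 - y) * φ 1 - (1 - y) * φ 2 ≤ φ y := by
      have h' : φ 1 - (1 - 1/(2-y)) * φ 2 ≤ (1/(2-y)) * φ y := by linarith
      have h'' := mul_le_mul_of_nonneg_left h' h2y.le
      have hne : (2-y) ≠ 0 := ne_of_gt h2y
      field_simp at h''
      nlinarith [h'']
    have : -((2-y)*|φ 1| + (1-y)*|φ 2|) ≤ φ y := by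
      have a1 : (2-y) * φ 1 ≥ -((2-y) * |φ 1|) := by nlinarith [neg_abs_le (φ 1), h2y.le]
      have a2 : (1-y) * φ 2 ≤ (1-y) * |φ 2| := by nlinarith [le_abs_self (φ 2)]
      linarith
    have : -K ≤ φ y := by
      have b1 : (2-y)*|φ 1| ≤ 2*|φ 1| := by nlinarith [abs_nonneg (φ 1)]
      have b2 : (1-y)*|φ 2| ≤ |φ 2| := by nlinarith [abs_nonneg (φ 2)]
      have : -K ≤ -((2-y)*|φ 1| + (1-y)*|φ 2|) := by
        simp only [hK]; nlinarith [abs_nonneg (φ 0), abs_nonneg (φ 2), abs_nonneg (φ 1)]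
      linarith
    have hx0 : 0 ≤ x := hy.trans hyx
    nlinarith [mul_nonneg hK0 hx0]
  · -- y ≥ 1 : 1 = (1/y) y + (1-1/y) 0
    have hy0 : (0:ℝ) < y := by linarith
    have hθ1 : 0 ≤ 1/y := by positivity
    have hθ2 : 0 ≤ 1 - 1/y := by
      have : 1/y ≤ 1 := by rw [div_le_one hy0]; linarith
      linarith
    have hsum : 1/y + (1 - 1/y) = 1 := by ring
    have := hφ.2 (show y ∈ Ici (0:ℝ) from hy) (show (0:ℝ) ∈ Ici (0:ℝ) from self_mem_Ici) hθ1 hθ2 hsum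
    simp only [smul_eq_mul] at this
    have e : (1/y) * y + (1 - 1/y) * (0:ℝ) = 1 := by field_simp; ring
    rw [e] at this
    have hφy : y * φ 1 - (y - 1) * φ 0 ≤ φ y := by
      have h' : φ 1 - (1 - 1/y) * φ 0 ≤ (1/y) * φ y := by linarith
      have hm := mul_le_mul_of_nonneg_left h' hy0.le
      have e1 : y * (φ 1 - (1 - 1/y) * φ 0) = y * φ 1 - (y-1) * φ 0 := by
        field_simp
      have e2 : y * (1/y * φ y) = φ y := by field_simp
      rw [e1, e2] at hm; exact hm
    have : -(y*|φ 1| + (y-1)*|φ 0|) ≤ φ y := by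
      have a1 : y * φ 1 ≥ -(y * |φ 1|) := by nlinarith [neg_abs_le (φ 1), hy0.le]
      have a2 : (y-1) * φ 0 ≤ (y-1) * |φ 0| := by nlinarith [le_abs_self (φ 0)]
      linarith
    have hyx' : y ≤ 1 + x := by linarith
    have c1 : y * |φ 1| ≤ (1+x) * |φ 1| := by nlinarith [abs_nonneg (φ 1)]
    have c2 : (y-1) * |φ 0| ≤ (1+x) * |φ 0| := by nlinarith [abs_nonneg (φ 0)]
    have c3 : (1+x) * |φ 1| + (1+x) * |φ 0| ≤ K * (1+x) := by
      simp only [hK]; nlinarith [abs_nonneg (φ 2), abs_nonneg (φ 0), abs_nonneg (φ 1), hx1]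
    linarith

lemma convAbsBound (hφ : ConvexOn ℝ (Ici (0:ℝ)) φ) {y x : ℝ} (hy : 0 ≤ y) (hyx : y ≤ x) :
    |φ y| ≤ |φ 0| + |φ x| + (2*(|φ 0| + |φ 1| + |φ 2|)) * (1 + x) := by
  have hx1 : (0:ℝ) ≤ 1 + x := by linarith [hy.trans hyx]
  have h0 : 0 ≤ (2*(|φ 0| + |φ 1| + |φ 2|)) * (1 + x) :=
    mul_nonneg (by positivity) hx1
  rw [abs_le]; constructor
  · have := convLower hφ hy hyx
    have h0' : (0:ℝ) ≤ |φ 0| + |φ x| := by positivity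
    linarith
  · have h := convUpper hφ hy hyx
    have hmax : max (φ 0) (φ x) ≤ |φ 0| + |φ x| := by
      apply max_le
      · linarith [le_abs_self (φ 0), abs_nonneg (φ x)]
      · linarith [le_abs_self (φ x), abs_nonneg (φ 0)]
    linarith



variable {N : ℕ}

/-- Expectation of `γ` under independent Bernoulli(q n) for `n ∈ s`, others absent. -/
def Esum (s : Finset (Fin N)) (q : Fin N → ℝ) (γ : Finset (Fin N) → ℝ) : ℝ :=
  ∑ t ∈ s.powerset, γ t * ((∏ n ∈ t, q n) * ∏ n ∈ s \ t, (1 - q n))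

lemma Esum_congr {s : Finset (Fin N)} {q q' : Fin N → ℝ} (γ : Finset (Fin N) → ℝ)
    (h : ∀ n ∈ s, q n = q' n) : Esum s q γ = Esum s q' γ := by
  unfold Esum
  refine Finset.sum_congr rfl fun t ht => ?_
  have hts := Finset.mem_powerset.mp ht
  congr 1
  congr 1
  · exact Finset.prod_congr rfl fun n hn => h n (hts hn)
  · exact Finset.prod_congr rfl fun n hn => by rw [h n (Finset.mem_sdiff.mp hn).1]

lemma Esum_insert {s : Finset (Fin N)} {a : Fin N} (ha : a ∉ s) (q : Fin N → ℝ)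
    (γ : Finset (Fin N) → ℝ) :
    Esum (insert a s) q γ
      = (1 - q a) * Esum s q γ + q a * Esum s q (fun t => γ (insert a t)) := by
  unfold Esum
  rw [Finset.sum_powerset_insert ha]
  rw [Finset.mul_sum, Finset.mul_sum]
  congr 1
  · refine Finset.sum_congr rfl fun t ht => ?_
    have hts := Finset.mem_powerset.mp ht
    have hat : a ∉ t := fun h => ha (hts h)
    have h1 : insert a s \ t = insert a (s \ t) := by
      rw [Finset.insert_sdiff_of_notMem _ hat]
    have h2 : a ∉ s \ t := fun h => ha (Finset.mem_sdiff.mp h).1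
    rw [h1, Finset.prod_insert h2]
    ring
  · refine Finset.sum_congr rfl fun t ht => ?_
    have hts := Finset.mem_powerset.mp ht
    have hat : a ∉ t := fun h => ha (hts h)
    have h1 : insert a s \ insert a t = s \ t := by
      ext x
      simp only [Finset.mem_sdiff, Finset.mem_insert]
      constructor
      · rintro ⟨hx1 | hx1, hx2⟩
        · exact absurd (Or.inl hx1) hx2
        · exact ⟨hx1, fun h => hx2 (Or.inr h)⟩
      · rintro ⟨hx1, hx2⟩
        exact ⟨Or.inr hx1, fun h => by
          rcases h with h | h
          · exact ha (h ▸ hx1)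
          · exact hx2 h⟩
    rw [h1, Finset.prod_insert hat]
    ring

lemma Esum_nonneg {s : Finset (Fin N)} {q : Fin N → ℝ} {γ : Finset (Fin N) → ℝ}
    (hγ : ∀ t ∈ s.powerset, 0 ≤ γ t) (hq : ∀ n ∈ s, q n ∈ Icc (0:ℝ) 1) :
    0 ≤ Esum s q γ := by
  refine Finset.sum_nonneg fun t ht => ?_
  have hts := Finset.mem_powerset.mp ht
  refine mul_nonneg (hγ t ht) (mul_nonneg ?_ ?_)
  · exact Finset.prod_nonneg fun n hn => (hq n (hts hn)).1
  · exact Finset.prod_nonneg fun n hn => by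
      have := (hq n (Finset.mem_sdiff.mp hn).1).2; linarith

lemma Esum_sub (s : Finset (Fin N)) (q : Fin N → ℝ) (γ₁ γ₂ : Finset (Fin N) → ℝ) :
    Esum s q (fun t => γ₁ t - γ₂ t) = Esum s q γ₁ - Esum s q γ₂ := by
  unfold Esum
  rw [← Finset.sum_sub_distrib]
  exact Finset.sum_congr rfl fun t _ => by ring

lemma Esum_abs_le (s : Finset (Fin N)) (q : Fin N → ℝ) (γ : Finset (Fin N) → ℝ)
    (hq : ∀ n, q n ∈ Icc (0:ℝ) 1) :
    |Esum s q γ| ≤ ∑ t ∈ s.powerset, |γ t| := by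
  refine le_trans (Finset.abs_sum_le_sum_abs _ _) ?_
  refine Finset.sum_le_sum fun t _ => ?_
  rw [abs_mul]
  have h1 : |(∏ n ∈ t, q n) * ∏ n ∈ s \ t, (1 - q n)| ≤ 1 := by
    rw [abs_mul]
    have p1 : |∏ n ∈ t, q n| ≤ 1 := by
      rw [Finset.abs_prod]
      refine Finset.prod_le_one (fun n _ => abs_nonneg _) fun n _ => ?_
      rw [abs_le]; exact ⟨by linarith [(hq n).1], (hq n).2⟩
    have p2 : |∏ n ∈ s \ t, (1 - q n)| ≤ 1 := by
      rw [Finset.abs_prod]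
      refine Finset.prod_le_one (fun n _ => abs_nonneg _) fun n _ => ?_
      rw [abs_le]; constructor <;> [linarith [(hq n).2]; linarith [(hq n).1]]
    calc |∏ n ∈ t, q n| * |∏ n ∈ s \ t, (1 - q n)| ≤ 1 * 1 := by
          exact mul_le_mul p1 p2 (abs_nonneg _) zero_le_one
      _ = 1 := by ring
  nlinarith [abs_nonneg (γ t), abs_nonneg ((∏ n ∈ t, q n) * ∏ n ∈ s \ t, (1 - q n))]

/-- monotone w.r.t. `⊆` from insert-monotonicity. -/
lemma mono_of_insert {γ : Finset (Fin N) → ℝ} {s : Finset (Fin N)}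
    (h : ∀ j ∈ s, ∀ u ⊆ s, j ∉ u → γ u ≤ γ (insert j u)) :
    ∀ t t', t ⊆ t' → t' ⊆ s → γ t ≤ γ t' := by
  have key : ∀ (v : Finset (Fin N)), ∀ t, t ⊆ s → v ⊆ s → γ t ≤ γ (t ∪ v) := by
    intro v
    induction v using Finset.induction_on with
    | empty => intro t _ _; simp
    | @insert j v hj ih =>
      intro t ht hv
      have hjs : j ∈ s := hv (Finset.mem_insert_self j v)
      have hvs : v ⊆ s := fun x hx => hv (Finset.mem_insert_of_mem hx)
      have e : t ∪ insert j v = insert j (t ∪ v) := by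
        ext x; simp only [Finset.mem_union, Finset.mem_insert]; tauto
      rw [e]
      refine le_trans (ih t ht hvs) ?_
      by_cases hjv : j ∈ t ∪ v
      · rw [Finset.insert_eq_self.mpr hjv]
      · exact h j hjs (t ∪ v) (Finset.union_subset ht hvs) hjv
  intro t t' htt' ht's
  have := key (t' \ t) t (fun x hx => ht's (htt' hx)) (fun x hx => ht's (Finset.mem_sdiff.mp hx).1)
  rwa [Finset.union_sdiff_of_subset htt'] at this

lemma Esum_mono {s : Finset (Fin N)} {q q' : Fin N → ℝ} {γ : Finset (Fin N) → ℝ}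
    (hγ : ∀ t t', t ⊆ t' → t' ⊆ s → γ t ≤ γ t')
    (hq : ∀ n ∈ s, q n ∈ Icc (0:ℝ) 1) (hq' : ∀ n ∈ s, q' n ∈ Icc (0:ℝ) 1)
    (hqq' : ∀ n ∈ s, q n ≤ q' n) :
    Esum s q γ ≤ Esum s q' γ := by
  induction s using Finset.induction_on generalizing γ with
  | empty => unfold Esum; simp
  | @insert a s ha ih =>
    have hmem : ∀ n ∈ s, q n ∈ Icc (0:ℝ) 1 := fun n hn => hq n (Finset.mem_insert_of_mem hn)
    have hmem' : ∀ n ∈ s, q' n ∈ Icc (0:ℝ) 1 := fun n hn => hq' n (Finset.mem_insert_of_mem hn)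
    have hle : ∀ n ∈ s, q n ≤ q' n := fun n hn => hqq' n (Finset.mem_insert_of_mem hn)
    have haI : q a ∈ Icc (0:ℝ) 1 := hq a (Finset.mem_insert_self a s)
    have haI' : q' a ∈ Icc (0:ℝ) 1 := hq' a (Finset.mem_insert_self a s)
    have hγs : ∀ t t', t ⊆ t' → t' ⊆ s → γ t ≤ γ t' := fun t t' h1 h2 =>
      hγ t t' h1 (h2.trans (Finset.subset_insert a s))
    have hγas : ∀ t t', t ⊆ t' → t' ⊆ s → γ (insert a t) ≤ γ (insert a t') := by
      intro t t' h1 h2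
      refine hγ _ _ (Finset.insert_subset_insert a h1) ?_
      exact Finset.insert_subset_insert a (h2.trans (Finset.subset_insert a s)) |>.trans
        (by rw [Finset.insert_eq_self.mpr (Finset.mem_insert_self a s)])
    rw [Esum_insert ha, Esum_insert ha]
    -- step 1 : replace q by q' inside, coefficient q a fixed
    have s1 : (1 - q a) * Esum s q γ + q a * Esum s q (fun t => γ (insert a t))
        ≤ (1 - q a) * Esum s q' γ + q a * Esum s q' (fun t => γ (insert a t)) := by
      have i1 := ih hγs hmem hmem' hle
      have i2 := ih hγas hmem hmem' hle
      have c1 : 0 ≤ 1 - q a := by linarith [haI.2]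
      have c2 : 0 ≤ q a := haI.1
      nlinarith [i1, i2]
    -- step 2 : replace q a by q' a
    have s2 : (1 - q a) * Esum s q' γ + q a * Esum s q' (fun t => γ (insert a t))
        ≤ (1 - q' a) * Esum s q' γ + q' a * Esum s q' (fun t => γ (insert a t)) := by
      have hdiff : 0 ≤ Esum s q' (fun t => γ (insert a t)) - Esum s q' γ := by
        rw [← Esum_sub]
        refine Esum_nonneg (fun t ht => ?_) hmem'
        have hts := Finset.mem_powerset.mp ht
        have := hγ t (insert a t) (Finset.subset_insert a t)
          (Finset.insert_subset_insert a (hts.trans (Finset.subset_insert a s)) |>.trans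
            (by rw [Finset.insert_eq_self.mpr (Finset.mem_insert_self a s)]))
        linarith
      have := hqq' a (Finset.mem_insert_self a s)
      nlinarith [hdiff]
    linarith



variable (μ : Measure ℝ) [IsProbabilityMeasure μ]

lemma cdf_setNE {t : ℝ} (ht : t < 1) : {x : ℝ | t ≤ cdf μ x}.Nonempty := by
  have := (tendsto_cdf_atTop μ).eventually (eventually_ge_nhds ht)
  exact this.exists

lemma cdf_bddBelow {t : ℝ} (ht : 0 < t) : BddBelow {x : ℝ | t ≤ cdf μ x} := by
  have := ((tendsto_cdf_atBot μ).eventually (eventually_lt_nhds ht)).exists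
  obtain ⟨y0, hy0⟩ := this
  refine ⟨y0, fun y hy => ?_⟩
  by_contra h
  push_neg at h
  exact absurd (le_trans hy ((cdf μ).mono h.le)) (not_le.mpr hy0)

lemma qinv_le_iff {t x : ℝ} (ht : t ∈ Ioo (0:ℝ) 1) :
    qinv (fun y => cdf μ y) t ≤ x ↔ t ≤ cdf μ x := by
  have hne := cdf_setNE μ ht.2
  have hbdd := cdf_bddBelow μ ht.1
  constructor
  · intro h
    have key : t ≤ cdf μ (sInf {y : ℝ | t ≤ cdf μ y}) := by
      set c := sInf {y : ℝ | t ≤ cdf μ y} with hc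
      have h1 : ∀ y ∈ Ioi c, t ≤ cdf μ y := by
        intro y hy
        obtain ⟨s, hs, hsy⟩ := (csInf_lt_iff hbdd hne).mp hy
        exact le_trans hs ((cdf μ).mono hsy.le)
      have h2 : Tendsto (fun y => cdf μ y) (nhdsWithin c (Ioi c)) (nhds (cdf μ c)) :=
        ((cdf μ).right_continuous c).tendsto.mono_left
          (nhdsWithin_mono c Ioi_subset_Ici_self)
      refine ge_of_tendsto h2 ?_
      exact eventually_nhdsWithin_of_forall h1
    exact le_trans key ((cdf μ).mono h)
  · intro h
    exact csInf_le hbdd h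

lemma qinv_monoOn : MonotoneOn (qinv (fun y => cdf μ y)) (Ioo (0:ℝ) 1) := by
  intro t ht t' ht' htt'
  exact csInf_le_csInf (cdf_bddBelow μ ht.1) (cdf_setNE μ ht'.2)
    (fun x hx => le_trans htt' hx)

/-- Measurable modification of the quantile function. -/
def Qm : ℝ → ℝ := fun t => if t ∈ Ioo (0:ℝ) 1 then qinv (fun y => cdf μ y) t else 0

lemma Qm_measurable : Measurable (Qm μ) := by
  apply measurable_of_Iic
  intro c
  have : Qm μ ⁻¹' Iic c
      = (Ioo 0 1 ∩ Iic (cdf μ c)) ∪ (if (0:ℝ) ≤ c then (Ioo (0:ℝ) 1)ᶜ else ∅) := by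
    ext t
    simp only [mem_preimage, mem_Iic, Qm, mem_union, mem_inter_iff, mem_compl_iff]
    by_cases ht : t ∈ Ioo (0:ℝ) 1
    · simp only [if_pos ht]
      rw [qinv_le_iff μ ht]
      constructor
      · intro h; exact Or.inl ⟨ht, h⟩
      · rintro (⟨_, h⟩ | h)
        · exact h
        · split at h
          · exact absurd ht h
          · exact absurd h (notMem_empty t)
    · simp only [if_neg ht]
      constructor
      · intro h
        right
        rw [if_pos h]
        exact ht
      · rintro (⟨h, _⟩ | h)
        · exact absurd h ht
        · split at h
          · assumption
          · exact absurd h (notMem_empty t)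
  rw [this]
  refine MeasurableSet.union (measurableSet_Ioo.inter measurableSet_Iic) ?_
  split
  · exact measurableSet_Ioo.compl
  · exact MeasurableSet.empty

lemma Qm_map : (volume.restrict (Ioo (0:ℝ) 1)).map (Qm μ) = μ := by
  have hQ := Qm_measurable μ
  haveI : IsProbabilityMeasure (volume.restrict (Ioo (0:ℝ) 1)) := by
    constructor
    simp [Real.volume_Ioo]
  haveI : IsProbabilityMeasure ((volume.restrict (Ioo (0:ℝ) 1)).map (Qm μ)) :=
    Measure.isProbabilityMeasure_map hQ.aemeasurable
  refine Measure.ext_of_Iic _ _ (fun x => ?_)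
  rw [Measure.map_apply hQ measurableSet_Iic]
  have hset : Qm μ ⁻¹' Iic x ∩ Ioo 0 1 = Iic (cdf μ x) ∩ Ioo 0 1 := by
    ext t
    simp only [mem_inter_iff, mem_preimage, mem_Iic, Qm]
    constructor
    · rintro ⟨h1, h2⟩
      rw [if_pos h2] at h1
      exact ⟨(qinv_le_iff μ h2).mp h1, h2⟩
    · rintro ⟨h1, h2⟩
      rw [if_pos h2]
      exact ⟨(qinv_le_iff μ h2).mpr h1, h2⟩
  rw [Measure.restrict_apply (hQ measurableSet_Iic), hset]
  have hc0 : 0 ≤ cdf μ x := cdf_nonneg μ x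
  have hc1 : cdf μ x ≤ 1 := cdf_le_one μ x
  rw [← ofReal_cdf μ x]
  rcases lt_or_ge (cdf μ x) 1 with h1 | h1
  · have : Iic (cdf μ x) ∩ Ioo (0:ℝ) 1 = Ioc 0 (cdf μ x) := by
      ext t
      simp only [mem_inter_iff, mem_Iic, mem_Ioo, mem_Ioc]
      constructor
      · rintro ⟨ha, hb, _⟩; exact ⟨hb, ha⟩
      · rintro ⟨ha, hb⟩; exact ⟨hb, ha, lt_of_le_of_lt hb h1⟩
    rw [this, Real.volume_Ioc]
    simp
  · have hc1' : cdf μ x = 1 := le_antisymm hc1 h1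
    have : Iic (cdf μ x) ∩ Ioo (0:ℝ) 1 = Ioo 0 1 := by
      rw [hc1']
      ext t
      simp only [mem_inter_iff, mem_Iic, mem_Ioo]
      exact ⟨fun h => h.2, fun h => ⟨h.2.le, h⟩⟩
    rw [this, Real.volume_Ioo, hc1']
    simp



/-! ### Monotone extension -/

def mExt (f : ℝ → ℝ) : ℝ → ℝ := fun t => sSup (insert 0 (f '' (Ioo 0 1 ∩ Iic t)))

variable {f : ℝ → ℝ}

lemma mExt_bddAbove (hf01 : ∀ t ∈ Ioo (0:ℝ) 1, f t ∈ Icc (0:ℝ) 1) (t : ℝ) :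
    BddAbove (insert 0 (f '' (Ioo 0 1 ∩ Iic t))) := by
  refine ⟨1, fun x hx => ?_⟩
  rcases hx with h | h
  · simp [h]
  · obtain ⟨y, hy, rfl⟩ := h
    exact (hf01 y hy.1).2

lemma mExt_mem (hf01 : ∀ t ∈ Ioo (0:ℝ) 1, f t ∈ Icc (0:ℝ) 1) (t : ℝ) :
    mExt f t ∈ Icc (0:ℝ) 1 := by
  constructor
  · exact le_csSup (mExt_bddAbove hf01 t) (mem_insert _ _)
  · refine csSup_le (insert_nonempty _ _) fun x hx => ?_
    rcases hx with h | h
    · simp [h]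
    · obtain ⟨y, hy, rfl⟩ := h
      exact (hf01 y hy.1).2

lemma mExt_mono (hf01 : ∀ t ∈ Ioo (0:ℝ) 1, f t ∈ Icc (0:ℝ) 1) : Monotone (mExt f) := by
  intro t t' htt'
  refine csSup_le_csSup (mExt_bddAbove hf01 t') (insert_nonempty _ _) ?_
  apply insert_subset_insert
  exact image_mono (inter_subset_inter_right _ (Iic_subset_Iic.mpr htt'))

lemma mExt_eqOn (hf : MonotoneOn f (Ioo (0:ℝ) 1)) (hf01 : ∀ t ∈ Ioo (0:ℝ) 1, f t ∈ Icc (0:ℝ) 1) :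
    ∀ t ∈ Ioo (0:ℝ) 1, mExt f t = f t := by
  intro t ht
  refine le_antisymm ?_ ?_
  · refine csSup_le (insert_nonempty _ _) fun x hx => ?_
    rcases hx with h | h
    · rw [h]; exact (hf01 t ht).1
    · obtain ⟨y, hy, rfl⟩ := h
      exact hf hy.1 ht hy.2
  · exact le_csSup (mExt_bddAbove hf01 t) (Or.inr ⟨t, ⟨ht, le_refl t⟩, rfl⟩)

/-! ### integration by parts inequality -/

lemma integrable_of_bound {α : Type*} [MeasurableSpace α] {ν : Measure α} [IsFiniteMeasure ν] {h : α → ℝ} (C : ℝ)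
    (hm : AEStronglyMeasurable h ν) (hb : ∀ t, |h t| ≤ C) : Integrable h ν :=
  (integrable_const C).mono' hm (ae_of_all _ hb)

lemma ibp {B f g : ℝ → ℝ} (hB : Monotone B) (hfm : Measurable f) (hgm : Measurable g)
    (hf01 : ∀ x, f x ∈ Icc (0:ℝ) 1) (hg01 : ∀ x, g x ∈ Icc (0:ℝ) 1)
    (hcmp : ∀ s ∈ Icc (0:ℝ) 1, ∫ t in Ioo 0 s, g t ≤ ∫ t in Ioo 0 s, f t)
    (heq : (∫ t in Ioo (0:ℝ) 1, g t) = ∫ t in Ioo (0:ℝ) 1, f t) :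
    0 ≤ ∫ t in Ioo (0:ℝ) 1, B t * (g t - f t) := by
  have hBm : Measurable B := hB.measurable
  set I : Set ℝ := Ioo (0:ℝ) 1 with hI
  set K : Set ℝ := Icc (B 0) (B 1) with hK
  haveI : IsFiniteMeasure (volume.restrict I) :=
    ⟨by rw [Measure.restrict_apply_univ]; exact measure_Ioo_lt_top⟩
  haveI : IsFiniteMeasure (volume.restrict K) :=
    ⟨by rw [Measure.restrict_apply_univ]; exact measure_Icc_lt_top⟩
  -- the product kernel
  set S : Set (ℝ × ℝ) := {y | B y.1 ≤ y.2 ∧ y.2 < B 1} with hS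
  have hSmeas : MeasurableSet S := by
    have h1 : MeasurableSet {y : ℝ × ℝ | B y.1 ≤ y.2} := by
      have : {y : ℝ × ℝ | B y.1 ≤ y.2} = (fun y : ℝ × ℝ => y.2 - B y.1) ⁻¹' Ici 0 := by
        ext y; simp [sub_nonneg]
      rw [this]
      exact (measurable_snd.sub (hBm.comp measurable_fst)) measurableSet_Ici
    have h2 : MeasurableSet {y : ℝ × ℝ | y.2 < B 1} :=
      measurable_snd measurableSet_Iio
    exact h1.inter h2
  set F2 : ℝ → ℝ → ℝ := fun t u => S.indicator (fun _ => (1:ℝ)) (t, u) * (f t - g t) with hF2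
  have hF2meas : Measurable (Function.uncurry F2) := by
    have : Function.uncurry F2 = fun y : ℝ × ℝ =>
        S.indicator (fun _ => (1:ℝ)) y * (f y.1 - g y.1) := by
      ext y; simp [Function.uncurry, hF2]
    rw [this]
    exact ((measurable_const.indicator hSmeas)).mul ((hfm.sub hgm).comp measurable_fst)
  have hF2int : Integrable (Function.uncurry F2) ((volume.restrict I).prod (volume.restrict K)) := by
    refine integrable_of_bound 1 hF2meas.aestronglyMeasurable fun y => ?_
    simp only [Function.uncurry, hF2]
    rw [abs_mul]
    have h1 : |S.indicator (fun _ => (1:ℝ)) (y.1, y.2)| ≤ 1 := by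
      by_cases h : (y.1, y.2) ∈ S <;> simp [indicator_apply, h]
    have h2 : |f y.1 - g y.1| ≤ 1 := by
      have := hf01 y.1; have := hg01 y.1
      rw [abs_le]; constructor <;> simp only [mem_Icc] at * <;> [linarith; linarith]
    calc |S.indicator (fun _ => (1:ℝ)) (y.1, y.2)| * |f y.1 - g y.1| ≤ 1 * 1 :=
      mul_le_mul h1 h2 (abs_nonneg _) zero_le_one
    _ = 1 := by ring
  have swap := integral_integral_swap hF2int
  -- inner integral over u
  have inner1 : ∀ t ∈ I, (∫ u in K, F2 t u) = (B 1 - B t) * (f t - g t) := by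
    intro t ht
    have hBt : B 0 ≤ B t := hB ht.1.le
    have hBt1 : B t ≤ B 1 := hB ht.2.le
    have hfun : (fun u => F2 t u) = (Ico (B t) (B 1)).indicator (fun _ => f t - g t) := by
      funext u
      simp only [hF2, indicator_apply, hS, mem_setOf_eq, mem_Ico]
      by_cases h : B t ≤ u ∧ u < B 1
      · rw [if_pos h, if_pos h]; exact one_mul _
      · rw [if_neg h, if_neg h]; exact zero_mul _
    rw [hfun, integral_indicator measurableSet_Ico, Measure.restrict_restrict measurableSet_Ico]
    have : Ico (B t) (B 1) ∩ K = Ico (B t) (B 1) := by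
      refine inter_eq_self_of_subset_left fun u hu => ?_
      exact ⟨le_trans hBt hu.1, hu.2.le⟩
    rw [this, setIntegral_const, Real.volume_real_Ico_of_le (by linarith)]
    simp only [smul_eq_mul]
  -- inner integral over t is nonneg
  have inner2 : ∀ u, 0 ≤ ∫ t in I, F2 t u := by
    intro u
    by_cases hu : u < B 1
    · have hfun : (fun t => F2 t u) = fun t => ({t : ℝ | B t ≤ u}).indicator (fun t => f t - g t) t := by
        funext t
        simp only [hF2, indicator_apply, hS, mem_setOf_eq]
        by_cases h : B t ≤ u
        · rw [if_pos ⟨h, hu⟩, if_pos h]; exact one_mul _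
        · rw [if_neg (fun hh => h hh.1), if_neg h]; exact zero_mul _
      have hA : MeasurableSet {t : ℝ | B t ≤ u} := hBm measurableSet_Iic
      rw [hfun, integral_indicator hA, Measure.restrict_restrict hA]
      set A : Set ℝ := {t : ℝ | B t ≤ u} ∩ I with hA2
      set s : ℝ := sSup (insert 0 A) with hs
      have hbddA : BddAbove (insert 0 A) := by
        refine ⟨1, fun x hx => ?_⟩
        rcases hx with h | h
        · simp [h]
        · exact h.2.2.le
      have hs0 : 0 ≤ s := le_csSup hbddA (mem_insert _ _)
      have hs1 : s ≤ 1 := by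
        refine csSup_le (insert_nonempty _ _) fun x hx => ?_
        rcases hx with h | h
        · simp [h]
        · exact h.2.2.le
      have hsub1 : Ioo 0 s ⊆ A := by
        intro t ht'
        obtain ⟨x, hx, htx⟩ := exists_lt_of_lt_csSup (insert_nonempty _ _) ht'.2
        have hxA : x ∈ A := by
          rcases hx with h | h
          · exact absurd (h ▸ htx) (not_lt.mpr ht'.1.le)
          · exact h
        refine ⟨le_trans (hB htx.le) hxA.1, ht'.1, lt_trans htx hxA.2.2⟩
      have hsub2 : A ⊆ Ioc 0 s := fun t ht' =>
        ⟨ht'.2.1, le_csSup hbddA (Or.inr ht')⟩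
      have haeeq : A =ᵐ[volume] Ioo 0 s := by
        rw [ae_eq_set]
        constructor
        · refine measure_mono_null (fun t ht' => ?_) (measure_singleton s)
          have h1 := hsub2 ht'.1
          have h2 := ht'.2
          simp only [mem_Ioo, not_and, not_lt] at h2
          have : t = s := le_antisymm h1.2 (h2 h1.1)
          simp [this]
        · have he : Ioo 0 s \ A = ∅ := by
            rw [diff_eq_empty]
            exact hsub1
          rw [he]; simp
      have : (∫ t in A, (f t - g t)) = ∫ t in Ioo 0 s, (f t - g t) :=
        setIntegral_congr_set haeeq
      rw [this]
      have hint1 : Integrable f (volume.restrict (Ioo 0 s)) := by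
        haveI : IsFiniteMeasure (volume.restrict (Ioo (0:ℝ) s)) :=
          ⟨by rw [Measure.restrict_apply_univ]; exact measure_Ioo_lt_top⟩
        exact integrable_of_bound 1 hfm.aestronglyMeasurable fun t => by
          have := hf01 t; rw [abs_le]; simp only [mem_Icc] at this; constructor <;> linarith
      have hint2 : Integrable g (volume.restrict (Ioo 0 s)) := by
        haveI : IsFiniteMeasure (volume.restrict (Ioo (0:ℝ) s)) :=
          ⟨by rw [Measure.restrict_apply_univ]; exact measure_Ioo_lt_top⟩
        exact integrable_of_bound 1 hgm.aestronglyMeasurable fun t => by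
          have := hg01 t; rw [abs_le]; simp only [mem_Icc] at this; constructor <;> linarith
      rw [integral_sub hint1 hint2]
      have := hcmp s ⟨hs0, hs1⟩
      linarith
    · have hfun : (fun t => F2 t u) = fun _ => (0:ℝ) := by
        funext t
        simp only [hF2, indicator_apply, hS, mem_setOf_eq]
        rw [if_neg (fun hh => hu hh.2)]
        exact zero_mul _
      rw [hfun]
      simp
  -- combine
  have step2 : 0 ≤ ∫ t in I, (B 1 - B t) * (f t - g t) := by
    have e1 : (∫ t in I, (B 1 - B t) * (f t - g t)) = ∫ t in I, ∫ u in K, F2 t u := by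
      refine (setIntegral_congr_fun measurableSet_Ioo fun t ht => ?_).symm
      exact inner1 t ht
    rw [e1, swap]
    exact integral_nonneg inner2
  -- step 1 : algebra
  have hIf : Integrable f (volume.restrict I) :=
    integrable_of_bound 1 hfm.aestronglyMeasurable fun t => by
      have := hf01 t; rw [abs_le]; simp only [mem_Icc] at this; constructor <;> linarith
  have hIg : Integrable g (volume.restrict I) :=
    integrable_of_bound 1 hgm.aestronglyMeasurable fun t => by
      have := hg01 t; rw [abs_le]; simp only [mem_Icc] at this; constructor <;> linarith
  have hBb : ∀ t, |B 1 - B t| ≤ 2*|B 1| + |B 0| ∨ True := fun t => Or.inr trivial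
  have int1 : Integrable (fun t => (B 1 - B t) * (f t - g t)) (volume.restrict I) := by
    refine Integrable.mono' (integrable_const (2*|B 1| + |B 0|))
      (((measurable_const.sub hBm).mul (hfm.sub hgm)).aestronglyMeasurable) ?_
    rw [ae_restrict_iff' measurableSet_Ioo]
    refine ae_of_all _ fun t ht => ?_
    have h1 : B 0 ≤ B t := hB ht.1.le
    have h2 : B t ≤ B 1 := hB ht.2.le
    have h3 : |B 1 - B t| ≤ |B 1| + |B 0| := by
      rw [abs_le]; constructor
      · linarith [abs_nonneg (B 1), abs_nonneg (B 0)]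
      · linarith [le_abs_self (B 1), neg_abs_le (B 0)]
    have h4 : |f t - g t| ≤ 1 := by
      have := hf01 t; have := hg01 t
      rw [abs_le]; simp only [mem_Icc] at *; constructor <;> linarith
    have : ‖(B 1 - B t) * (f t - g t)‖ = |B 1 - B t| * |f t - g t| := abs_mul _ _
    rw [this]
    calc |B 1 - B t| * |f t - g t| ≤ (|B 1| + |B 0|) * 1 :=
      mul_le_mul h3 h4 (abs_nonneg _) (by positivity)
    _ ≤ 2*|B 1| + |B 0| := by nlinarith [abs_nonneg (B 1)]
  have int2 : Integrable (fun t => B 1 * (g t - f t)) (volume.restrict I) :=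
    (hIg.sub hIf).const_mul (B 1)
  have eid : (∫ t in I, B t * (g t - f t))
      = (∫ t in I, (B 1 - B t) * (f t - g t)) + ∫ t in I, B 1 * (g t - f t) := by
    rw [← integral_add int1 int2]
    refine setIntegral_congr_fun measurableSet_Ioo fun t _ => ?_
    ring
  have elast : (∫ t in I, B 1 * (g t - f t)) = 0 := by
    rw [MeasureTheory.integral_const_mul, integral_sub hIg hIf, heq]
    ring
  rw [eid, elast]
  linarith [step2]



open MeasureTheory ProbabilityTheory Set Filter

variable {N : ℕ}

def mix (f g : Fin N → ℝ → ℝ) (k : ℕ) : Fin N → ℝ → ℝ :=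
  fun n => if (n:ℕ) < k then g n else f n

lemma compare {c : Finset (Fin N) → ℝ} {f g : Fin N → ℝ → ℝ}
    (hsm : ∀ (a b : Fin N) (t : Finset (Fin N)), a ≠ b → a ∉ t → b ∉ t →
      c (insert a t) + c (insert b t) ≤ c t + c (insert a (insert b t)))
    (hf : ∀ n, Monotone (f n)) (hg : ∀ n, Monotone (g n))
    (hf01 : ∀ n x, f n x ∈ Icc (0:ℝ) 1) (hg01 : ∀ n x, g n x ∈ Icc (0:ℝ) 1)
    (hcmp : ∀ n, ∀ s ∈ Icc (0:ℝ) 1, (∫ t in Ioo 0 s, g n t) ≤ ∫ t in Ioo 0 s, f n t)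
    (heq : ∀ n, (∫ t in Ioo (0:ℝ) 1, g n t) = ∫ t in Ioo (0:ℝ) 1, f n t) :
    (∫ t in Ioo (0:ℝ) 1, Esum Finset.univ (fun n => f n t) c)
      ≤ ∫ t in Ioo (0:ℝ) 1, Esum Finset.univ (fun n => g n t) c := by
  classical
  haveI : IsFiniteMeasure (volume.restrict (Ioo (0:ℝ) 1)) :=
    ⟨by rw [Measure.restrict_apply_univ]; exact measure_Ioo_lt_top⟩
  set q : ℕ → Fin N → ℝ → ℝ := mix f g with hq
  have hmixmono : ∀ k n, Monotone (q k n) := by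
    intro k n
    simp only [hq, mix]
    split <;> [exact hg n; exact hf n]
  have hmix01 : ∀ k n x, q k n x ∈ Icc (0:ℝ) 1 := by
    intro k n x
    simp only [hq, mix]
    split <;> [exact hg01 n x; exact hf01 n x]
  have hmeas : ∀ k, Measurable (fun t => Esum Finset.univ (fun n => q k n t) c) := by
    intro k
    unfold Esum
    refine Finset.measurable_sum _ fun u _ => ?_
    refine Measurable.const_mul (Measurable.mul ?_ ?_) _
    · exact Finset.measurable_prod _ fun n _ => (hmixmono k n).measurable
    · exact Finset.measurable_prod _ fun n _ => measurable_const.sub (hmixmono k n).measurable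
  have hint : ∀ k, Integrable (fun t => Esum Finset.univ (fun n => q k n t) c)
      (volume.restrict (Ioo (0:ℝ) 1)) := by
    intro k
    refine integrable_of_bound (∑ u ∈ (Finset.univ : Finset (Fin N)).powerset, |c u|)
      (hmeas k).aestronglyMeasurable fun t => ?_
    exact Esum_abs_le _ _ _ (fun n => hmix01 k n t)
  have step : ∀ k, k < N → (∫ t in Ioo (0:ℝ) 1, Esum Finset.univ (fun n => q k n t) c)
      ≤ ∫ t in Ioo (0:ℝ) 1, Esum Finset.univ (fun n => q (k+1) n t) c := by
    intro k hk
    set a : Fin N := ⟨k, hk⟩ with ha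
    have hnm : a ∉ Finset.univ.erase a := Finset.notMem_erase a _
    set δc : Finset (Fin N) → ℝ := fun u => c (insert a u) - c u with hδc
    set B : ℝ → ℝ := fun t => Esum (Finset.univ.erase a) (fun n => q k n t) δc with hB
    have hagree : ∀ t, ∀ n ∈ Finset.univ.erase a, q (k+1) n t = q k n t := by
      intro t n hn
      have hna : (n:ℕ) ≠ k := by
        intro h
        exact (Finset.mem_erase.mp hn).1 (Fin.ext (h.trans rfl))
      simp only [hq, mix]
      by_cases h : (n:ℕ) < k
      · rw [if_pos h, if_pos (Nat.lt_succ_of_lt h)]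
      · rw [if_neg h, if_neg (by omega)]
    have hqa1 : ∀ t, q k a t = f a t := by
      intro t
      simp only [hq, mix, ha]
      rw [if_neg (by omega)]
    have hqa2 : ∀ t, q (k+1) a t = g a t := by
      intro t
      simp only [hq, mix, ha]
      rw [if_pos (by omega)]
    have hdiff : ∀ t, Esum Finset.univ (fun n => q (k+1) n t) c
        - Esum Finset.univ (fun n => q k n t) c = (g a t - f a t) * B t := by
      intro t
      have huniv : Esum Finset.univ (fun n => q (k+1) n t) c
          = Esum (insert a (Finset.univ.erase a)) (fun n => q (k+1) n t) c := by
        rw [Finset.insert_erase (Finset.mem_univ a)]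
      have huniv' : Esum Finset.univ (fun n => q k n t) c
          = Esum (insert a (Finset.univ.erase a)) (fun n => q k n t) c := by
        rw [Finset.insert_erase (Finset.mem_univ a)]
      rw [huniv, huniv', Esum_insert hnm, Esum_insert hnm]
      rw [Esum_congr c (hagree t), Esum_congr (fun u => c (insert a u)) (hagree t)]
      rw [hqa1 t, hqa2 t]
      have hBt : B t = Esum (Finset.univ.erase a) (fun n => q k n t) (fun u => c (insert a u))
          - Esum (Finset.univ.erase a) (fun n => q k n t) c := by
        rw [hB]
        simp only [hδc]
        rw [Esum_sub]
      rw [hBt]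
      ring
    have hBmono : Monotone B := by
      intro t t' htt'
      rw [hB]
      refine Esum_mono ?_ (fun n _ => hmix01 k n t) (fun n _ => hmix01 k n t')
        (fun n _ => hmixmono k n htt')
      refine mono_of_insert ?_
      intro j hj u hu hju
      simp only [hδc]
      have haj : a ≠ j := fun h => (Finset.mem_erase.mp hj).1 h.symm
      have hau : a ∉ u := fun h => (Finset.mem_erase.mp (hu h)).1 rfl
      have := hsm a j u haj hau hju
      linarith
    have h0 := ibp hBmono (hf a).measurable (hg a).measurable (hf01 a) (hg01 a) (hcmp a) (heq a)
    have e : (∫ t in Ioo (0:ℝ) 1, (Esum Finset.univ (fun n => q (k+1) n t) c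
        - Esum Finset.univ (fun n => q k n t) c))
        = ∫ t in Ioo (0:ℝ) 1, B t * (g a t - f a t) := by
      refine setIntegral_congr_fun measurableSet_Ioo fun t _ => ?_
      rw [hdiff t]
      ring
    have esub := integral_sub (hint (k+1)) (hint k)
    rw [esub] at e
    linarith [h0, e.ge, e.le]
  have chain : ∀ k, (∫ t in Ioo (0:ℝ) 1, Esum Finset.univ (fun n => q 0 n t) c)
      ≤ ∫ t in Ioo (0:ℝ) 1, Esum Finset.univ (fun n => q (min k N) n t) c := by
    intro k
    induction k with
    | zero => simp [Nat.min_eq_left (Nat.zero_le N)]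
    | succ k ih =>
      rcases le_or_gt (k+1) N with h | h
      · rw [Nat.min_eq_left h]
        have hkN : k < N := Nat.lt_of_succ_le h
        rw [Nat.min_eq_left hkN.le] at ih
        exact le_trans ih (step k hkN)
      · rw [Nat.min_eq_right h.le]
        rw [Nat.min_eq_right (Nat.lt_succ_iff.mp h)] at ih
        exact ih
  have h0N := chain N
  rw [Nat.min_self] at h0N
  have e0 : (fun t => Esum Finset.univ (fun n => q 0 n t) c)
      = fun t => Esum Finset.univ (fun n => f n t) c := by
    funext t
    have h : (fun n : Fin N => q 0 n t) = fun n => f n t := funext fun n => by simp [hq, mix]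
    rw [h]
  have eN : (fun t => Esum Finset.univ (fun n => q N n t) c)
      = fun t => Esum Finset.univ (fun n => g n t) c := by
    funext t
    have h : (fun n : Fin N => q N n t) = fun n => g n t := funext fun n => by
      simp [hq, mix, n.isLt]
    rw [h]
  rw [e0, eN] at h0N
  exact h0N



open MeasureTheory ProbabilityTheory Set Filter

/-- measurable version of a convex function on `[0,∞)` -/
def psiOf (φ : ℝ → ℝ) : ℝ → ℝ := fun x => if _ : x ∈ Ioi (0:ℝ) then φ x else φ 0

lemma psiOf_eq {φ : ℝ → ℝ} {x : ℝ} (hx : 0 ≤ x) : psiOf φ x = φ x := by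
  unfold psiOf
  rcases lt_or_eq_of_le hx with h | h
  · rw [dif_pos (mem_Ioi.mpr h)]
  · rw [dif_neg (by rw [← h]; exact fun hh => lt_irrefl 0 (mem_Ioi.mp hh)), ← h]

lemma psi_measurable {φ : ℝ → ℝ} (hφ : ConvexOn ℝ (Ici (0:ℝ)) φ) :
    Measurable (psiOf φ) := by
  unfold psiOf
  have hcont : ContinuousOn φ (Ioi (0:ℝ)) := by
    have := hφ.continuousOn_interior
    rwa [interior_Ici] at this
  have h1 : Measurable (fun x : {a : ℝ // a ∈ Ioi (0:ℝ)} => φ x) := by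
    have : Continuous ((Ioi (0:ℝ)).restrict φ) :=
      continuousOn_iff_continuous_restrict.mp hcont
    exact this.measurable
  exact Measurable.dite h1 measurable_const measurableSet_Ioi

lemma expand {Ω : Type*} [MeasurableSpace Ω] (P : Measure Ω) [IsProbabilityMeasure P] {N : ℕ}
    (D : Fin N → Ω → ℝ) (Z : Ω → ℝ) (p : Fin N → ℝ → ℝ)
    (hD : ∀ n, Measurable (D n)) (hZ : Measurable Z)
    (hvals : ∀ n ω, D n ω = 0 ∨ D n ω = 1)
    (hp : ∀ n, Measurable (p n))
    (hp01 : ∀ n z, p n z ∈ Icc (0:ℝ) 1)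
    (hci : ∀ (d : Fin N → Bool) (B : Set ℝ), MeasurableSet B →
      P ((⋂ n, {ω | D n ω = (if d n then (1:ℝ) else 0)}) ∩ Z ⁻¹' B)
        = ENNReal.ofReal (∫ z in B, ∏ n, (if d n then p n z else 1 - p n z) ∂(P.map Z)))
    (η : Fin N → Ω → ℝ) (hηmeas : ∀ n, Measurable (η n)) (hηnonneg : ∀ n ω, 0 ≤ η n ω)
    {C : ℝ} (hηbdd : ∀ n ω, η n ω ≤ C)
    (hind : IndepFun (fun ω => fun n => η n ω) (fun ω => ((fun n => D n ω), Z ω)) P)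
    (ψ : ℝ → ℝ) (hψ : Measurable ψ) {K : ℝ}
    (hψbdd : ∀ y ∈ Icc (0:ℝ) ((N:ℝ)*C), |ψ y| ≤ K) :
    ∫ ω, ψ (∑ n, η n ω * D n ω) ∂P
      = ∫ z, Esum Finset.univ (fun n => p n z)
          (fun u => ∫ ω, ψ (∑ n ∈ u, η n ω) ∂P) ∂(P.map Z) := by
  classical
  haveI : IsProbabilityMeasure (P.map Z) := Measure.isProbabilityMeasure_map hZ.aemeasurable
  have hΩne : Nonempty Ω := by
    by_contra h
    rw [not_nonempty_iff] at h
    have h1 := measure_univ (μ := P)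
    rw [Set.univ_eq_empty_iff.mpr h, measure_empty] at h1
    exact one_ne_zero h1.symm
  obtain ⟨ω₀⟩ := hΩne
  have hNC : 0 ≤ (N:ℝ)*C := by
    rcases Nat.eq_zero_or_pos N with hN | hN
    · simp [hN]
    · have hC0 : 0 ≤ C := le_trans (hηnonneg ⟨0, hN⟩ ω₀) (hηbdd ⟨0, hN⟩ ω₀)
      positivity
  have hK0 : 0 ≤ K := le_trans (abs_nonneg _) (hψbdd 0 ⟨le_refl 0, hNC⟩)
  have hSmeas : ∀ u : Finset (Fin N), Measurable (fun ω => ∑ n ∈ u, η n ω) :=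
    fun u => Finset.measurable_sum _ fun n _ => hηmeas n
  have hSmem : ∀ (u : Finset (Fin N)) ω, (∑ n ∈ u, η n ω) ∈ Icc (0:ℝ) ((N:ℝ)*C) := by
    intro u ω
    refine ⟨Finset.sum_nonneg fun n _ => hηnonneg n ω, ?_⟩
    rcases Nat.eq_zero_or_pos N with hN | hN
    · have hu : u = ∅ := Finset.eq_empty_of_forall_notMem fun x _ => by
        have := x.2; omega
      simp [hu, hN]
    · have hC0 : 0 ≤ C := le_trans (hηnonneg ⟨0, hN⟩ ω) (hηbdd ⟨0, hN⟩ ω)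
      calc (∑ n ∈ u, η n ω) ≤ ∑ n ∈ u, C := Finset.sum_le_sum fun n _ => hηbdd n ω
        _ = (u.card : ℝ) * C := by rw [Finset.sum_const, nsmul_eq_mul]
        _ ≤ (N:ℝ) * C := by
          have hcard : (u.card : ℝ) ≤ (N:ℝ) := by
            have := Finset.card_le_card (Finset.subset_univ u)
            rw [Finset.card_univ, Fintype.card_fin] at this
            exact_mod_cast this
          exact mul_le_mul_of_nonneg_right hcard hC0
  set c : Finset (Fin N) → ℝ := fun u => ∫ ω, ψ (∑ n ∈ u, η n ω) ∂P with hc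
  have hintS : ∀ u : Finset (Fin N), Integrable (fun ω => ψ (∑ n ∈ u, η n ω)) P :=
    fun u => integrable_of_bound K ((hψ.comp (hSmeas u)).aestronglyMeasurable)
      (fun ω => hψbdd _ (hSmem u ω))
  set A : Finset (Fin N) → Set Ω :=
    fun u => ⋂ n, {ω | D n ω = if n ∈ u then (1:ℝ) else 0} with hA
  have hAmeas : ∀ u, MeasurableSet (A u) := by
    intro u
    refine MeasurableSet.iInter fun n => ?_
    exact (hD n) (measurableSet_singleton _)
  -- pointwise partition identity
  have hpoint : ∀ ω, ψ (∑ n, η n ω * D n ω)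
      = ∑ u ∈ Finset.univ.powerset,
          (A u).indicator (fun _ => (1:ℝ)) ω * ψ (∑ n ∈ u, η n ω) := by
    intro ω
    set u₀ := Finset.univ.filter (fun n => D n ω = 1) with hu₀
    have hmemA : ∀ u : Finset (Fin N), ω ∈ A u ↔ u = u₀ := by
      intro u
      constructor
      · intro h
        ext n
        have hn := mem_iInter.mp h n
        simp only [mem_setOf_eq] at hn
        by_cases hnu : n ∈ u
        · rw [if_pos hnu] at hn
          simp [hu₀, hnu, hn]
        · rw [if_neg hnu] at hn
          simp only [hu₀, Finset.mem_filter, Finset.mem_univ, true_and]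
          constructor
          · intro hx; exact absurd hx hnu
          · intro hx; rw [hn] at hx; norm_num at hx
      · rintro rfl
        refine mem_iInter.mpr fun n => ?_
        simp only [mem_setOf_eq]
        by_cases hnu : n ∈ u₀
        · rw [if_pos hnu]
          exact (Finset.mem_filter.mp hnu).2
        · rw [if_neg hnu]
          rcases hvals n ω with h | h
          · exact h
          · exact absurd (Finset.mem_filter.mpr ⟨Finset.mem_univ n, h⟩) hnu
    have h1 : ∀ u ∈ Finset.univ.powerset, u ≠ u₀ →
        (A u).indicator (fun _ => (1:ℝ)) ω * ψ (∑ n ∈ u, η n ω) = 0 := by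
      intro u _ hu
      rw [indicator_of_notMem (fun h => hu ((hmemA u).mp h)), zero_mul]
    have h2 : u₀ ∉ Finset.univ.powerset →
        (A u₀).indicator (fun _ => (1:ℝ)) ω * ψ (∑ n ∈ u₀, η n ω) = 0 := by
      intro h
      exact absurd (Finset.mem_powerset.mpr (Finset.subset_univ u₀)) h
    rw [Finset.sum_eq_single u₀ h1 h2]
    rw [indicator_of_mem ((hmemA u₀).mpr rfl), one_mul]
    congr 1
    rw [← Finset.sum_filter_add_sum_filter_not Finset.univ (fun n => D n ω = 1)
      (fun n => η n ω * D n ω)]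
    have e1 : ∑ n ∈ Finset.univ.filter (fun n => D n ω = 1), η n ω * D n ω
        = ∑ n ∈ u₀, η n ω :=
      Finset.sum_congr rfl fun n hn => by rw [(Finset.mem_filter.mp hn).2, mul_one]
    have e2 : ∑ n ∈ Finset.univ.filter (fun n => ¬ D n ω = 1), η n ω * D n ω = 0 := by
      refine Finset.sum_eq_zero fun n hn => ?_
      have hne := (Finset.mem_filter.mp hn).2
      rcases hvals n ω with h | h
      · rw [h, mul_zero]
      · exact absurd h hne
    rw [e1, e2, add_zero]
  -- integrate the partition
  have hterm_int : ∀ u : Finset (Fin N),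
      Integrable (fun ω => (A u).indicator (fun _ => (1:ℝ)) ω * ψ (∑ n ∈ u, η n ω)) P := by
    intro u
    refine integrable_of_bound K
      (((measurable_const.indicator (hAmeas u)).mul
        (hψ.comp (hSmeas u))).aestronglyMeasurable) fun ω => ?_
    rw [abs_mul]
    have hind1 : |(A u).indicator (fun _ => (1:ℝ)) ω| ≤ 1 := by
      by_cases h : ω ∈ A u <;> simp [indicator_apply, h]
    have hψ1 : |ψ (∑ n ∈ u, η n ω)| ≤ K := hψbdd _ (hSmem u ω)
    calc |(A u).indicator (fun _ => (1:ℝ)) ω| * |ψ (∑ n ∈ u, η n ω)| ≤ 1 * K :=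
      mul_le_mul hind1 hψ1 (abs_nonneg _) zero_le_one
    _ = K := one_mul K
  have hsplit : ∫ ω, ψ (∑ n, η n ω * D n ω) ∂P
      = ∑ u ∈ Finset.univ.powerset,
          ∫ ω, (A u).indicator (fun _ => (1:ℝ)) ω * ψ (∑ n ∈ u, η n ω) ∂P := by
    rw [show (fun ω => ψ (∑ n, η n ω * D n ω))
        = fun ω => ∑ u ∈ Finset.univ.powerset,
            (A u).indicator (fun _ => (1:ℝ)) ω * ψ (∑ n ∈ u, η n ω) from funext hpoint]
    exact integral_finset_sum _ fun u _ => hterm_int u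
  -- independence factorization
  have hfact : ∀ u : Finset (Fin N),
      (∫ ω, (A u).indicator (fun _ => (1:ℝ)) ω * ψ (∑ n ∈ u, η n ω) ∂P)
        = c u * (P (A u)).toReal := by
    intro u
    set Bset : Set ((Fin N → ℝ) × ℝ) :=
      {x | ∀ n, x.1 n = if n ∈ u then (1:ℝ) else 0} with hBset
    have hBmeas : MeasurableSet Bset := by
      have : Bset = ⋂ n, (fun x : (Fin N → ℝ) × ℝ => x.1 n) ⁻¹'
          {if n ∈ u then (1:ℝ) else 0} := by
        ext x; simp [hBset, mem_iInter]
      rw [this]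
      exact MeasurableSet.iInter fun n =>
        ((measurable_pi_apply n).comp measurable_fst) (measurableSet_singleton _)
    have hA_eq : A u = (fun ω => ((fun n => D n ω), Z ω)) ⁻¹' Bset := by
      ext ω
      simp [hA, hBset, mem_iInter, mem_preimage]
    have h1 : Measurable (fun v : Fin N → ℝ => ψ (∑ n ∈ u, v n)) :=
      hψ.comp (Finset.measurable_sum _ fun n _ => measurable_pi_apply n)
    have h2 : Measurable (Bset.indicator (fun _ => (1:ℝ))) :=
      measurable_const.indicator hBmeas
    have hiF : IndepFun (fun ω => ψ (∑ n ∈ u, η n ω))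
        (fun ω => Bset.indicator (fun _ => (1:ℝ)) ((fun n => D n ω), Z ω)) P :=
      hind.comp h1 h2
    have hindeq : ∀ ω, (A u).indicator (fun _ => (1:ℝ)) ω
        = Bset.indicator (fun _ => (1:ℝ)) ((fun n => D n ω), Z ω) := by
      intro ω
      by_cases h : ω ∈ A u
      · have h2 : ((fun n => D n ω), Z ω) ∈ Bset := by rw [hA_eq] at h; exact h
        rw [indicator_of_mem h, indicator_of_mem h2]
      · have h2 : ((fun n => D n ω), Z ω) ∉ Bset := by
          rw [hA_eq] at h; exact fun hh => h hh
        rw [indicator_of_notMem h, indicator_of_notMem h2]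
    have e : (fun ω => (A u).indicator (fun _ => (1:ℝ)) ω * ψ (∑ n ∈ u, η n ω))
        = (fun ω => ψ (∑ n ∈ u, η n ω))
          * (fun ω => Bset.indicator (fun _ => (1:ℝ)) ((fun n => D n ω), Z ω)) := by
      funext ω
      rw [Pi.mul_apply, hindeq ω]
      ring
    rw [e, hiF.integral_mul_eq_mul_integral ((hψ.comp (hSmeas u)).aestronglyMeasurable)
      ((h2.comp (Measurable.prodMk (measurable_pi_lambda _ hD) hZ)).aestronglyMeasurable)]
    congr 1
    have heq2 : (fun ω => Bset.indicator (fun _ => (1:ℝ)) ((fun n => D n ω), Z ω))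
        = (A u).indicator (fun _ => (1:ℝ)) := by
      funext ω
      exact (hindeq ω).symm
    rw [heq2, integral_indicator_const (1:ℝ) (hAmeas u), smul_eq_mul, mul_one, measureReal_def]
  -- probability of the pattern
  have hprob : ∀ u : Finset (Fin N), (P (A u)).toReal
      = ∫ z, (∏ n ∈ u, p n z) * ∏ n ∈ Finset.univ \ u, (1 - p n z) ∂(P.map Z) := by
    intro u
    set d : Fin N → Bool := fun n => decide (n ∈ u) with hd
    have hAd : (⋂ n, {ω | D n ω = (if d n then (1:ℝ) else 0)}) ∩ Z ⁻¹' univ = A u := by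
      rw [preimage_univ, inter_univ]
      refine iInter_congr fun n => ?_
      ext ω
      simp [hd, decide_eq_true_eq]
    have hpr : ∀ z, (∏ n, (if d n then p n z else 1 - p n z))
        = (∏ n ∈ u, p n z) * ∏ n ∈ Finset.univ \ u, (1 - p n z) := by
      intro z
      have : ∀ n : Fin N, (if d n then p n z else 1 - p n z)
          = (if n ∈ u then p n z else 1 - p n z) := by
        intro n
        simp [hd, decide_eq_true_eq]
      rw [Finset.prod_congr rfl fun n _ => this n]
      rw [Finset.prod_ite]
      congr 1
      · refine Finset.prod_congr ?_ (fun _ _ => rfl)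
        ext n; simp
      · refine Finset.prod_congr ?_ (fun _ _ => rfl)
        ext n; simp [Finset.mem_sdiff]
    have := hci d univ MeasurableSet.univ
    rw [hAd, Measure.restrict_univ] at this
    rw [this, ENNReal.toReal_ofReal]
    · rw [show (fun z => ∏ n, (if d n then p n z else 1 - p n z))
          = fun z => (∏ n ∈ u, p n z) * ∏ n ∈ Finset.univ \ u, (1 - p n z) from funext hpr]
    · refine integral_nonneg fun z => ?_
      refine Finset.prod_nonneg fun n _ => ?_
      by_cases h : d n
      · rw [if_pos h]; exact (hp01 n z).1
      · rw [if_neg h]; have := (hp01 n z).2; linarith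
  -- put it together
  rw [hsplit]
  have hwmeas : ∀ u : Finset (Fin N), Measurable
      (fun z => c u * ((∏ n ∈ u, p n z) * ∏ n ∈ Finset.univ \ u, (1 - p n z))) := by
    intro u
    refine Measurable.const_mul (Measurable.mul ?_ ?_) _
    · exact Finset.measurable_prod _ fun n _ => hp n
    · exact Finset.measurable_prod _ fun n _ => measurable_const.sub (hp n)
  have hwint : ∀ u : Finset (Fin N), Integrable
      (fun z => c u * ((∏ n ∈ u, p n z) * ∏ n ∈ Finset.univ \ u, (1 - p n z))) (P.map Z) := by
    intro u
    refine integrable_of_bound |c u| (hwmeas u).aestronglyMeasurable fun z => ?_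
    rw [abs_mul]
    have hw1 : |(∏ n ∈ u, p n z) * ∏ n ∈ Finset.univ \ u, (1 - p n z)| ≤ 1 := by
      rw [abs_mul]
      have p1 : |∏ n ∈ u, p n z| ≤ 1 := by
        rw [Finset.abs_prod]
        refine Finset.prod_le_one (fun n _ => abs_nonneg _) fun n _ => ?_
        rw [abs_le]; exact ⟨by linarith [(hp01 n z).1], (hp01 n z).2⟩
      have p2 : |∏ n ∈ Finset.univ \ u, (1 - p n z)| ≤ 1 := by
        rw [Finset.abs_prod]
        refine Finset.prod_le_one (fun n _ => abs_nonneg _) fun n _ => ?_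
        rw [abs_le]; constructor <;> [linarith [(hp01 n z).2]; linarith [(hp01 n z).1]]
      calc |∏ n ∈ u, p n z| * |∏ n ∈ Finset.univ \ u, (1 - p n z)| ≤ 1 * 1 :=
        mul_le_mul p1 p2 (abs_nonneg _) zero_le_one
      _ = 1 := one_mul 1
    calc |c u| * |(∏ n ∈ u, p n z) * ∏ n ∈ Finset.univ \ u, (1 - p n z)| ≤ |c u| * 1 :=
      mul_le_mul_of_nonneg_left hw1 (abs_nonneg _)
    _ = |c u| := mul_one _
  calc ∑ u ∈ Finset.univ.powerset,
        ∫ ω, (A u).indicator (fun _ => (1:ℝ)) ω * ψ (∑ n ∈ u, η n ω) ∂P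
      = ∑ u ∈ Finset.univ.powerset, c u * (P (A u)).toReal :=
        Finset.sum_congr rfl fun u _ => hfact u
    _ = ∑ u ∈ Finset.univ.powerset, ∫ z, c u *
          ((∏ n ∈ u, p n z) * ∏ n ∈ Finset.univ \ u, (1 - p n z)) ∂(P.map Z) := by
        refine Finset.sum_congr rfl fun u _ => ?_
        rw [hprob u, MeasureTheory.integral_const_mul]
    _ = ∫ z, ∑ u ∈ Finset.univ.powerset, c u *
          ((∏ n ∈ u, p n z) * ∏ n ∈ Finset.univ \ u, (1 - p n z)) ∂(P.map Z) :=
        (integral_finset_sum _ fun u _ => hwint u).symm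
    _ = ∫ z, Esum Finset.univ (fun n => p n z) c ∂(P.map Z) := rfl



open MeasureTheory ProbabilityTheory Set Filter

lemma distFun_eq {Ω : Type*} [MeasurableSpace Ω] (P : Measure Ω) [IsProbabilityMeasure P]
    {Z : Ω → ℝ} (hZ : Measurable Z) :
    distFun P Z = fun x => cdf (P.map Z) x := by
  funext x
  haveI : IsProbabilityMeasure (P.map Z) := Measure.isProbabilityMeasure_map hZ.aemeasurable
  rw [ProbabilityTheory.cdf_eq_real, measureReal_def]
  unfold distFun
  congr 1
  rw [Measure.map_apply hZ measurableSet_Iic]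
  rfl

lemma integral_eq_quantile (μ : Measure ℝ) [IsProbabilityMeasure μ] {h : ℝ → ℝ}
    (hm : Measurable h) :
    ∫ z, h z ∂μ = ∫ t in Ioo (0:ℝ) 1, h (Qm μ t) := by
  conv_lhs => rw [← Qm_map μ]
  rw [integral_map (Qm_measurable μ).aemeasurable hm.aestronglyMeasurable]

/-- the increasing rearranged conditional probability `p ∘ F⁻¹`, extended monotonically. -/
def ptil {Ω : Type*} [MeasurableSpace Ω] (P : Measure Ω) (Z : Ω → ℝ) (p : ℝ → ℝ) : ℝ → ℝ :=
  mExt (fun s => p (qinv (distFun P Z) s))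

section ptil

variable {Ω : Type*} [MeasurableSpace Ω] (P : Measure Ω) [IsProbabilityMeasure P]
  {Z : Ω → ℝ} {p : ℝ → ℝ}

lemma ptil_base_mem (hp01 : ∀ z, p z ∈ Icc (0:ℝ) 1) :
    ∀ t ∈ Ioo (0:ℝ) 1, p (qinv (distFun P Z) t) ∈ Icc (0:ℝ) 1 := fun t _ => hp01 _

lemma ptil_base_monoOn (hZ : Measurable Z) (hpm : Monotone p) :
    MonotoneOn (fun s => p (qinv (distFun P Z) s)) (Ioo (0:ℝ) 1) := by
  have e : distFun P Z = fun y => cdf (P.map Z) y := distFun_eq P hZ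
  intro t ht t' ht' htt'
  haveI : IsProbabilityMeasure (P.map Z) := Measure.isProbabilityMeasure_map hZ.aemeasurable
  refine hpm ?_
  rw [e]
  exact qinv_monoOn (P.map Z) ht ht' htt'

lemma ptil_mem (hp01 : ∀ z, p z ∈ Icc (0:ℝ) 1) (t : ℝ) :
    ptil P Z p t ∈ Icc (0:ℝ) 1 :=
  mExt_mem (ptil_base_mem P hp01) t

lemma ptil_mono (hp01 : ∀ z, p z ∈ Icc (0:ℝ) 1) : Monotone (ptil P Z p) :=
  mExt_mono (ptil_base_mem P hp01)

lemma ptil_agree (hZ : Measurable Z) (hpm : Monotone p) (hp01 : ∀ z, p z ∈ Icc (0:ℝ) 1) :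
    ∀ t ∈ Ioo (0:ℝ) 1, ptil P Z p t = p (qinv (distFun P Z) t) :=
  mExt_eqOn (ptil_base_monoOn P hZ hpm) (ptil_base_mem P hp01)

lemma ptil_Qm (hZ : Measurable Z) (hpm : Monotone p) (hp01 : ∀ z, p z ∈ Icc (0:ℝ) 1) :
    ∀ t ∈ Ioo (0:ℝ) 1, p (Qm (P.map Z) t) = ptil P Z p t := by
  intro t ht
  haveI : IsProbabilityMeasure (P.map Z) := Measure.isProbabilityMeasure_map hZ.aemeasurable
  rw [ptil_agree P hZ hpm hp01 t ht]
  unfold Qm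
  rw [if_pos ht]
  have e : distFun P Z = fun y => cdf (P.map Z) y := distFun_eq P hZ
  rw [e]

lemma defaultIntegral_eq (hZ : Measurable Z) (hpm : Monotone p)
    (hp01 : ∀ z, p z ∈ Icc (0:ℝ) 1) {s : ℝ} (hs : s ∈ Icc (0:ℝ) 1) :
    defaultIntegral P Z p s = ∫ t in Ioo 0 s, ptil P Z p t := by
  unfold defaultIntegral
  rw [intervalIntegral.integral_of_le hs.1, integral_Ioc_eq_integral_Ioo]
  refine setIntegral_congr_fun measurableSet_Ioo fun t ht => ?_
  have htI : t ∈ Ioo (0:ℝ) 1 := ⟨ht.1, lt_of_lt_of_le ht.2 hs.2⟩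
  exact (ptil_agree P hZ hpm hp01 t htI).symm

lemma ptil_total (hZ : Measurable Z) (hpm : Monotone p) (hpmeas : Measurable p)
    (hp01 : ∀ z, p z ∈ Icc (0:ℝ) 1) :
    (∫ t in Ioo (0:ℝ) 1, ptil P Z p t) = ∫ z, p z ∂(P.map Z) := by
  haveI : IsProbabilityMeasure (P.map Z) := Measure.isProbabilityMeasure_map hZ.aemeasurable
  rw [integral_eq_quantile (P.map Z) hpmeas]
  refine setIntegral_congr_fun measurableSet_Ioo fun t ht => ?_
  exact (ptil_Qm P hZ hpm hp01 t ht).symm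

end ptil

lemma model_integral {Ω : Type*} [MeasurableSpace Ω] (P : Measure Ω) [IsProbabilityMeasure P]
    {N : ℕ} (D : Fin N → Ω → ℝ) (Z : Ω → ℝ) (p : Fin N → ℝ → ℝ)
    (hD : ∀ n, Measurable (D n)) (hZ : Measurable Z)
    (hvals : ∀ n ω, D n ω = 0 ∨ D n ω = 1)
    (hp : ∀ n, Measurable (p n)) (hpm : ∀ n, Monotone (p n))
    (hp01 : ∀ n z, p n z ∈ Icc (0:ℝ) 1)
    (hci : ∀ (d : Fin N → Bool) (B : Set ℝ), MeasurableSet B →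
      P ((⋂ n, {ω | D n ω = (if d n then (1:ℝ) else 0)}) ∩ Z ⁻¹' B)
        = ENNReal.ofReal (∫ z in B, ∏ n, (if d n then p n z else 1 - p n z) ∂(P.map Z)))
    (η : Fin N → Ω → ℝ) (hηmeas : ∀ n, Measurable (η n)) (hηnonneg : ∀ n ω, 0 ≤ η n ω)
    {C : ℝ} (hηbdd : ∀ n ω, η n ω ≤ C)
    (hind : IndepFun (fun ω => fun n => η n ω) (fun ω => ((fun n => D n ω), Z ω)) P)
    (ψ : ℝ → ℝ) (hψ : Measurable ψ) {K : ℝ}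
    (hψbdd : ∀ y ∈ Icc (0:ℝ) ((N:ℝ)*C), |ψ y| ≤ K) :
    ∫ ω, ψ (∑ n, η n ω * D n ω) ∂P
      = ∫ t in Ioo (0:ℝ) 1, Esum Finset.univ (fun n => ptil P Z (p n) t)
          (fun u => ∫ ω, ψ (∑ n ∈ u, η n ω) ∂P) := by
  classical
  haveI : IsProbabilityMeasure (P.map Z) := Measure.isProbabilityMeasure_map hZ.aemeasurable
  rw [expand P D Z p hD hZ hvals hp hp01 hci η hηmeas hηnonneg hηbdd hind ψ hψ hψbdd]
  have hmeas : Measurable (fun z => Esum Finset.univ (fun n => p n z)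
      (fun u => ∫ ω, ψ (∑ n ∈ u, η n ω) ∂P)) := by
    unfold Esum
    refine Finset.measurable_sum _ fun u _ => ?_
    refine Measurable.const_mul (Measurable.mul ?_ ?_) _
    · exact Finset.measurable_prod _ fun n _ => hp n
    · exact Finset.measurable_prod _ fun n _ => measurable_const.sub (hp n)
  rw [integral_eq_quantile (P.map Z) hmeas]
  refine setIntegral_congr_fun measurableSet_Ioo fun t ht => ?_
  exact Esum_congr _ (fun n _ => ptil_Qm P hZ (hpm n) (hp01 n) t ht)


end Stmt0Aux
end

open Stmt0Aux

/-- Theorem: comparison of losses in siBMMs.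
If two siBMMs with the same default probabilities satisfy `G_{Dₙ,Z} ≥ G_{Dₙ',Z'}` pointwise,
then the portfolio losses are ordered in convex order. -/
theorem stmt0 {Ω : Type*} [MeasurableSpace Ω] (P : MeasureTheory.Measure Ω)
    [MeasureTheory.IsProbabilityMeasure P] (hP : MeasureAtomless P) {N : ℕ}
    (D D' : Fin N → Ω → ℝ) (Z Z' : Ω → ℝ) (π : Fin N → ℝ) (p p' : Fin N → ℝ → ℝ)
    (hM : IsSIBMM P D Z π p) (hM' : IsSIBMM P D' Z' π p')
    (hG : ∀ n, ∀ s ∈ Set.Icc (0:ℝ) 1,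
      defaultIntegral P Z' (p' n) s ≤ defaultIntegral P Z (p n) s)
    (δ : Fin N → Ω → ℝ) (hδmeas : ∀ n, Measurable (δ n))
    (hδnonneg : ∀ n ω, 0 ≤ δ n ω) (hδint : ∀ n, MeasureTheory.Integrable (δ n) P)
    (hδindep : ProbabilityTheory.iIndepFun δ P)
    (hδmodels : ProbabilityTheory.IndepFun (fun ω => fun n => δ n ω)
      (fun ω => ((fun n => D n ω), Z ω, (fun n => D' n ω), Z' ω)) P)
    (e : Fin N → ℝ) (he : ∀ n, 0 < e n) :
    ConvexOrder P (fun ω => ∑ n, e n * δ n ω * D n ω)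
      (fun ω => ∑ n, e n * δ n ω * D' n ω) := by

  classical
  intro φ hφ hintX hintY
  have hD := hM.measD
  have hZ := hM.measZ
  have hvals := hM.values
  have hp := hM.measp
  have hp01 := hM.p_mem
  have hpm := hM.mono
  have hD' := hM'.measD
  have hZ' := hM'.measZ
  have hvals' := hM'.values
  have hp' := hM'.measp
  have hp01' := hM'.p_mem
  have hpm' := hM'.mono
  set ψ : ℝ → ℝ := psiOf φ with hψdef
  have hψmeas : Measurable ψ := psi_measurable hφ
  have hψeq : ∀ x : ℝ, 0 ≤ x → ψ x = φ x := fun x hx => psiOf_eq hx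
  set K0 : ℝ := 2*(|φ 0| + |φ 1| + |φ 2|) with hK0def
  set E : ℝ := ∑ n, e n with hEdef
  have hE0 : 0 ≤ E := Finset.sum_nonneg fun n _ => (he n).le
  have heE : ∀ n, e n ≤ E := fun n =>
    Finset.single_le_sum (fun m _ => (he m).le) (Finset.mem_univ n)
  set η : ℕ → Fin N → Ω → ℝ := fun j n ω => e n * min (δ n ω) j with hηdef
  have hηmeas : ∀ j n, Measurable (η j n) := fun j n =>
    ((hδmeas n).min measurable_const).const_mul (e n)
  have hηnonneg : ∀ j n ω, 0 ≤ η j n ω := fun j n ω =>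
    mul_nonneg (he n).le (le_min (hδnonneg n ω) (Nat.cast_nonneg j))
  have hηbdd : ∀ j n ω, η j n ω ≤ E * j := by
    intro j n ω
    have h1 : min (δ n ω) (j:ℝ) ≤ (j:ℝ) := min_le_right _ _
    calc e n * min (δ n ω) j ≤ e n * j := mul_le_mul_of_nonneg_left h1 (he n).le
    _ ≤ E * j := mul_le_mul_of_nonneg_right (heE n) (Nat.cast_nonneg j)
  have hind1 : ∀ j : ℕ, ProbabilityTheory.IndepFun (fun ω => fun n => η j n ω)
      (fun ω => ((fun n => D n ω), Z ω)) P := by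
    intro j
    have hT1 : Measurable (fun v : Fin N → ℝ => fun n => e n * min (v n) (j:ℝ)) :=
      measurable_pi_lambda _ fun n => by fun_prop
    have hT2 : Measurable (fun x : (Fin N → ℝ) × ℝ × (Fin N → ℝ) × ℝ => (x.1, x.2.1)) :=
      measurable_fst.prodMk (measurable_fst.comp measurable_snd)
    exact hδmodels.comp hT1 hT2
  have hind2 : ∀ j : ℕ, ProbabilityTheory.IndepFun (fun ω => fun n => η j n ω)
      (fun ω => ((fun n => D' n ω), Z' ω)) P := by
    intro j
    have hT1 : Measurable (fun v : Fin N → ℝ => fun n => e n * min (v n) (j:ℝ)) :=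
      measurable_pi_lambda _ fun n => by fun_prop
    have hT2 : Measurable
        (fun x : (Fin N → ℝ) × ℝ × (Fin N → ℝ) × ℝ => (x.2.2.1, x.2.2.2)) :=
      (measurable_fst.comp (measurable_snd.comp measurable_snd)).prodMk
        (measurable_snd.comp (measurable_snd.comp measurable_snd))
    exact hδmodels.comp hT1 hT2
  set Kb : ℕ → ℝ := fun j => |φ 0| + |φ ((N:ℝ)*(E*j))| + K0 * (1 + (N:ℝ)*(E*j)) with hKbdef
  have hψbdd : ∀ j : ℕ, ∀ y ∈ Set.Icc (0:ℝ) ((N:ℝ)*(E*j)), |ψ y| ≤ Kb j := by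
    intro j y hy
    rw [hψeq y hy.1]
    exact convAbsBound hφ hy.1 hy.2
  set c : ℕ → Finset (Fin N) → ℝ := fun j u => ∫ ω, ψ (∑ n ∈ u, η j n ω) ∂P with hcdef
  have hSmeas : ∀ (j : ℕ) (u : Finset (Fin N)), Measurable (fun ω => ∑ n ∈ u, η j n ω) :=
    fun j u => Finset.measurable_sum _ fun n _ => hηmeas j n
  have hSbd : ∀ (j : ℕ) (v : Finset (Fin N)) ω,
      (∑ n ∈ v, η j n ω) ∈ Set.Icc (0:ℝ) ((N:ℝ)*(E*j)) := by
    intro j v ω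
    refine ⟨Finset.sum_nonneg fun n _ => hηnonneg j n ω, ?_⟩
    have hEj : 0 ≤ E * j := mul_nonneg hE0 (Nat.cast_nonneg j)
    calc (∑ n ∈ v, η j n ω) ≤ ∑ _n ∈ v, E*j := Finset.sum_le_sum fun n _ => hηbdd j n ω
    _ = (v.card : ℝ) * (E*j) := by rw [Finset.sum_const, nsmul_eq_mul]
    _ ≤ (N:ℝ)*(E*j) := by
        refine mul_le_mul_of_nonneg_right ?_ hEj
        have hcard := Finset.card_le_card (Finset.subset_univ v)
        rw [Finset.card_univ, Fintype.card_fin] at hcard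
        exact_mod_cast hcard
  have hIu : ∀ (j : ℕ) (v : Finset (Fin N)),
      MeasureTheory.Integrable (fun ω => ψ (∑ n ∈ v, η j n ω)) P := by
    intro j v
    refine integrable_of_bound (Kb j)
      ((hψmeas.comp (hSmeas j v)).aestronglyMeasurable) fun ω => ?_
    exact hψbdd j _ (hSbd j v ω)
  have hsm : ∀ j : ℕ, ∀ (a b : Fin N) (u : Finset (Fin N)), a ≠ b → a ∉ u → b ∉ u →
      c j (insert a u) + c j (insert b u) ≤ c j u + c j (insert a (insert b u)) := by
    intro j a b u hab ha hb
    have ha' : a ∉ insert b u := by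
      simp only [Finset.mem_insert]
      push_neg
      exact ⟨hab, ha⟩
    have hpt : ∀ ω, ψ (∑ n ∈ insert a u, η j n ω) + ψ (∑ n ∈ insert b u, η j n ω)
        ≤ ψ (∑ n ∈ u, η j n ω) + ψ (∑ n ∈ insert a (insert b u), η j n ω) := by
      intro ω
      have hs0 : 0 ≤ ∑ n ∈ u, η j n ω := Finset.sum_nonneg fun n _ => hηnonneg j n ω
      have hηa := hηnonneg j a ω
      have hηb := hηnonneg j b ω
      have ea : ∑ n ∈ insert a u, η j n ω = (∑ n ∈ u, η j n ω) + η j a ω := by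
        rw [Finset.sum_insert ha]; ring
      have eb : ∑ n ∈ insert b u, η j n ω = (∑ n ∈ u, η j n ω) + η j b ω := by
        rw [Finset.sum_insert hb]; ring
      have eab : ∑ n ∈ insert a (insert b u), η j n ω
          = (∑ n ∈ u, η j n ω) + η j a ω + η j b ω := by
        rw [Finset.sum_insert ha', Finset.sum_insert hb]; ring
      rw [ea, eb, eab, hψeq _ (by linarith), hψeq _ (by linarith), hψeq _ hs0,
        hψeq _ (by linarith)]
      exact convSM hφ hs0 hηa hηb
    simp only [hcdef]
    rw [← MeasureTheory.integral_add (hIu j _) (hIu j _),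
      ← MeasureTheory.integral_add (hIu j _) (hIu j _)]
    exact MeasureTheory.integral_mono ((hIu j _).add (hIu j _))
      ((hIu j _).add (hIu j _)) hpt
  have hkey : ∀ j : ℕ, (∫ ω, ψ (∑ n, η j n ω * D n ω) ∂P)
      ≤ ∫ ω, ψ (∑ n, η j n ω * D' n ω) ∂P := by
    intro j
    rw [model_integral P D Z p hD hZ hvals hp hpm hp01 hM.condIndep (η j) (hηmeas j)
      (hηnonneg j) (hηbdd j) (hind1 j) ψ hψmeas (hψbdd j)]
    rw [model_integral P D' Z' p' hD' hZ' hvals' hp' hpm' hp01' hM'.condIndep (η j)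
      (hηmeas j) (hηnonneg j) (hηbdd j) (hind2 j) ψ hψmeas (hψbdd j)]
    refine compare (hsm j) (fun n => ptil_mono P (hp01 n)) (fun n => ptil_mono P (hp01' n))
      (fun n x => ptil_mem P (hp01 n) x) (fun n x => ptil_mem P (hp01' n) x) ?_ ?_
    · intro n s hs
      rw [← defaultIntegral_eq P hZ' (hpm' n) (hp01' n) hs,
        ← defaultIntegral_eq P hZ (hpm n) (hp01 n) hs]
      exact hG n s hs
    · intro n
      have t1 : (∫ t in Set.Ioo (0:ℝ) 1, ptil P Z (p n) t) = π n := by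
        rw [ptil_total P hZ (hpm n) (hp n) (hp01 n)]
        have h1 := hM.condVersion n Set.univ MeasurableSet.univ
        rw [Set.preimage_univ, Set.inter_univ, Measure.restrict_univ, hM.prob n] at h1
        exact ((ENNReal.ofReal_eq_ofReal_iff ((hM.pi_mem n).1)
          (MeasureTheory.integral_nonneg fun z => (hp01 n z).1)).mp h1).symm
      have t2 : (∫ t in Set.Ioo (0:ℝ) 1, ptil P Z' (p' n) t) = π n := by
        rw [ptil_total P hZ' (hpm' n) (hp' n) (hp01' n)]
        have h1 := hM'.condVersion n Set.univ MeasurableSet.univ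
        rw [Set.preimage_univ, Set.inter_univ, Measure.restrict_univ, hM'.prob n] at h1
        exact ((ENNReal.ofReal_eq_ofReal_iff ((hM'.pi_mem n).1)
          (MeasureTheory.integral_nonneg fun z => (hp01' n z).1)).mp h1).symm
      rw [t1, t2]
  have tend : ∀ (Dm : Fin N → Ω → ℝ), (∀ n, Measurable (Dm n)) →
      (∀ n ω, Dm n ω = 0 ∨ Dm n ω = 1) →
      MeasureTheory.Integrable (fun ω => φ (∑ n, e n * δ n ω * Dm n ω)) P →
      Filter.Tendsto (fun j : ℕ => ∫ ω, ψ (∑ n, η j n ω * Dm n ω) ∂P) Filter.atTop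
        (nhds (∫ ω, φ (∑ n, e n * δ n ω * Dm n ω) ∂P)) := by
    intro Dm hDm hDmvals hint
    set Xf := fun ω => ∑ n, e n * δ n ω * Dm n ω with hXf
    have hDm01 : ∀ n ω, 0 ≤ Dm n ω ∧ Dm n ω ≤ 1 := by
      intro n ω; rcases hDmvals n ω with h | h <;> rw [h] <;> norm_num
    have hXfnn : ∀ ω, 0 ≤ Xf ω := fun ω => Finset.sum_nonneg fun n _ =>
      mul_nonneg (mul_nonneg (he n).le (hδnonneg n ω)) (hDm01 n ω).1
    have hXfint : MeasureTheory.Integrable Xf P := by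
      apply MeasureTheory.integrable_finset_sum
      intro n _
      refine MeasureTheory.Integrable.mono' ((hδint n).const_mul (e n))
        ((((hδmeas n).const_mul (e n)).mul (hDm n)).aestronglyMeasurable)
        (Filter.Eventually.of_forall fun ω => ?_)
      rw [Real.norm_eq_abs, abs_mul]
      have h1 : |e n * δ n ω| = e n * δ n ω :=
        abs_of_nonneg (mul_nonneg (he n).le (hδnonneg n ω))
      have h2 : |Dm n ω| ≤ 1 := by rcases hDmvals n ω with h | h <;> rw [h] <;> norm_num
      calc |e n * δ n ω| * |Dm n ω| ≤ |e n * δ n ω| * 1 :=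
        mul_le_mul_of_nonneg_left h2 (abs_nonneg _)
      _ = e n * δ n ω := by rw [mul_one, h1]
    have hXj : ∀ (j : ℕ) ω, (∑ n, η j n ω * Dm n ω) ∈ Set.Icc 0 (Xf ω) := by
      intro j ω
      constructor
      · exact Finset.sum_nonneg fun n _ => mul_nonneg (hηnonneg j n ω) (hDm01 n ω).1
      · refine Finset.sum_le_sum fun n _ => ?_
        refine mul_le_mul_of_nonneg_right ?_ (hDm01 n ω).1
        exact mul_le_mul_of_nonneg_left (min_le_left _ _) (he n).le
    refine MeasureTheory.tendsto_integral_of_dominated_convergence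
      (fun ω => |φ 0| + |φ (Xf ω)| + K0 * (1 + Xf ω)) ?_ ?_ ?_ ?_
    · intro j
      exact (hψmeas.comp (Finset.measurable_sum _ fun n _ =>
        (hηmeas j n).mul (hDm n))).aestronglyMeasurable
    · have hφX : MeasureTheory.Integrable (fun ω => |φ (Xf ω)|) P := hint.abs
      have h2 : MeasureTheory.Integrable (fun ω => K0 * (1 + Xf ω)) P := by
        have e2 : (fun ω => K0 * (1 + Xf ω)) = fun ω => K0 + K0 * Xf ω :=
          funext fun ω => by ring
        rw [e2]
        exact (MeasureTheory.integrable_const K0).add (hXfint.const_mul K0)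
      exact ((MeasureTheory.integrable_const _).add hφX).add h2
    · intro j
      refine Filter.Eventually.of_forall fun ω => ?_
      have h := hXj j ω
      rw [Real.norm_eq_abs, hψeq _ h.1]
      exact convAbsBound hφ h.1 h.2
    · refine Filter.Eventually.of_forall fun ω => ?_
      have hev : ∀ j : ℕ, (⌈∑ n, δ n ω⌉₊ ≤ j) →
          ψ (∑ n, η j n ω * Dm n ω) = φ (Xf ω) := by
        intro j hj
        have hδle : ∀ n, δ n ω ≤ (j:ℝ) := by
          intro n
          have h1 : δ n ω ≤ ∑ m, δ m ω :=
            Finset.single_le_sum (fun m _ => hδnonneg m ω) (Finset.mem_univ n)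
          have h2 : (∑ m, δ m ω) ≤ (⌈∑ m, δ m ω⌉₊ : ℝ) := Nat.le_ceil _
          have h3 : ((⌈∑ m, δ m ω⌉₊ : ℕ) : ℝ) ≤ (j:ℝ) := by exact_mod_cast hj
          linarith
        have hXeq : (∑ n, η j n ω * Dm n ω) = Xf ω := by
          refine Finset.sum_congr rfl fun n _ => ?_
          have : η j n ω = e n * δ n ω := by
            simp only [hηdef]
            rw [min_eq_left (hδle n)]
          rw [this]
        rw [hXeq, hψeq _ (hXfnn ω)]
      refine Filter.Tendsto.congr' ?_ tendsto_const_nhds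
      exact Filter.eventuallyEq_of_mem (Filter.mem_atTop ⌈∑ n, δ n ω⌉₊)
        fun j hj => (hev j hj).symm
  exact le_of_tendsto_of_tendsto' (tend D hD hvals hintX) (tend D' hD' hvals' hintY) hkey
end

section
/- Let Y, ε_1, …, ε_N be independent real-valued random variables, let f_n : ℝ² → ℝ be measurable and increasing in its first argument, and set X_n := f_n(Y, ε_n). Let c_n ∈ ℝ, define default indicators D_n := 1_{{X_n ≤ c_n}}, and let Z := g(Y) for a strictly decreasing function g : ℝ → ℝ. Then D_1, …, D_N are conditionally independent given Z, and for each n the conditional probability z ↦ P(D_n = 1 | Z = z) admits an increasing version. -/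
open MeasureTheory ProbabilityTheory Set

/-- Lemma: construction of siBMMs through threshold models.
With `Xₙ = fₙ(Y, εₙ)`, `fₙ` increasing in its first argument, `Dₙ = 1_{Xₙ ≤ cₙ}` and
`Z = g(Y)` for strictly decreasing `g`, the `Dₙ` are conditionally independent given `Z`
and the conditional default probabilities admit increasing versions; i.e. `(D, Z)` is an
siBMM with default probabilities `πₙ = P(Dₙ = 1)`. -/
theorem stmt1 {Ω : Type*} [MeasurableSpace Ω] (P : MeasureTheory.Measure Ω)
    [MeasureTheory.IsProbabilityMeasure P] (hP : MeasureAtomless P) {N : ℕ}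
    (Y : Ω → ℝ) (ε : Fin N → Ω → ℝ) (hY : Measurable Y) (hε : ∀ n, Measurable (ε n))
    (hindep : ProbabilityTheory.iIndepFun
      (Fin.cons Y ε : Fin (N + 1) → Ω → ℝ) P)
    (f : Fin N → ℝ × ℝ → ℝ) (hfmeas : ∀ n, Measurable (f n))
    (hfmono : ∀ n t, Monotone fun y => f n (y, t))
    (X : Fin N → Ω → ℝ) (hX : ∀ n ω, X n ω = f n (Y ω, ε n ω))
    (c : Fin N → ℝ)
    (D : Fin N → Ω → ℝ) (hD : ∀ n ω, D n ω = if X n ω ≤ c n then 1 else 0)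
    (g : ℝ → ℝ) (hg : StrictAnti g)
    (Z : Ω → ℝ) (hZ : ∀ ω, Z ω = g (Y ω)) :
    ∃ p : Fin N → ℝ → ℝ,
      IsSIBMM P D Z (fun n => (P {ω | D n ω = 1}).toReal) p := by
    classical
  have hgm : Measurable g := hg.antitone.measurable
  have hZe : Z = fun ω => g (Y ω) := funext hZ
  subst hZe
  have hZm : Measurable fun ω => g (Y ω) := hgm.comp hY
  have hprobZ : IsProbabilityMeasure (P.map fun ω => g (Y ω)) :=
    Measure.isProbabilityMeasure_map hZm.aemeasurable
  set μY : Measure ℝ := P.map Y with hμY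
  have hprobY : IsProbabilityMeasure μY := by
    rw [hμY]; exact Measure.isProbabilityMeasure_map hY.aemeasurable
  set ν : Fin N → Measure ℝ := fun n => P.map (ε n) with hν
  have hprobν : ∀ n, IsProbabilityMeasure (ν n) := fun n => by
    rw [hν]; exact Measure.isProbabilityMeasure_map (hε n).aemeasurable
  haveI : ∀ n, IsProbabilityMeasure (ν n) := hprobν
  have hSm : ∀ n, MeasurableSet {x : ℝ × ℝ | f n x ≤ c n} := fun n =>
    measurableSet_le (hfmeas n) measurable_const
  set q : Fin N → ℝ → ENNReal :=
    fun n y => ν n (Prod.mk y ⁻¹' {x : ℝ × ℝ | f n x ≤ c n}) with hq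
  have hqle : ∀ n y, q n y ≤ 1 := fun n y => prob_le_one
  have hqne : ∀ n y, q n y ≠ ⊤ := fun n y => measure_ne_top _ _
  set h : Fin N → ℝ → ℝ := fun n y => (q n y).toReal with hh
  have hh0 : ∀ n y, 0 ≤ h n y := fun n y => ENNReal.toReal_nonneg
  have hh1 : ∀ n y, h n y ≤ 1 := fun n y => by
    simpa [hh] using ENNReal.toReal_mono ENNReal.one_ne_top (hqle n y)
  have hq_eq : ∀ n y, ENNReal.ofReal (h n y) = q n y := fun n y =>
    ENNReal.ofReal_toReal (hqne n y)
  have hhanti : ∀ n, Antitone (h n) := by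
    intro n y y' hyy'
    refine ENNReal.toReal_mono (hqne n y) (measure_mono fun t ht => ?_)
    exact le_trans (hfmono n t hyy') ht
  set p : Fin N → ℝ → ℝ := fun n z => sSup (insert 0 (h n '' {y | g y ≤ z})) with hp
  have hbdd : ∀ n z, BddAbove (insert (0:ℝ) (h n '' {y | g y ≤ z})) := by
    intro n z
    refine ⟨1, ?_⟩
    rintro v (rfl | ⟨y, -, rfl⟩)
    · norm_num
    · exact hh1 n y
  have hpmono : ∀ n, Monotone (p n) := by
    intro n z z' hzz'
    refine csSup_le_csSup (hbdd n z') ⟨0, mem_insert _ _⟩ ?_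
    exact insert_subset_insert (image_mono fun y hy => le_trans hy hzz')
  have hpg : ∀ n y, p n (g y) = h n y := by
    intro n y
    refine IsGreatest.csSup_eq ⟨mem_insert_of_mem _ ⟨y, by simp, rfl⟩, ?_⟩
    rintro v (rfl | ⟨y', hy', rfl⟩)
    · exact hh0 n y
    · exact hhanti n (hg.le_iff_ge.mp hy')
  have hp0 : ∀ n z, 0 ≤ p n z := fun n z => le_csSup (hbdd n z) (mem_insert _ _)
  have hp1 : ∀ n z, p n z ≤ 1 := by
    intro n z
    refine csSup_le ⟨0, mem_insert _ _⟩ ?_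
    rintro v (rfl | ⟨y, -, rfl⟩)
    · norm_num
    · exact hh1 n y
  have hpmeas : ∀ n, Measurable (p n) := fun n => (hpmono n).measurable
  -- the key disintegration identity
  have key : ∀ A : Set ℝ, MeasurableSet A → ∀ S : Fin N → Set (ℝ × ℝ),
      (∀ n, MeasurableSet (S n)) →
      P (Y ⁻¹' A ∩ ⋂ n, {ω | (Y ω, ε n ω) ∈ S n})
        = ∫⁻ y in A, ∏ n, ν n (Prod.mk y ⁻¹' S n) ∂μY := by
    intro A hA S hS
    set W : Fin (N + 1) → Ω → ℝ := Fin.cons Y ε with hW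
    have hWm : ∀ i, Measurable (W i) := by
      intro i
      refine Fin.cases ?_ ?_ i
      · simpa [hW] using hY
      · intro j; simpa [hW] using hε j
    set V : Ω → Fin (N + 1) → ℝ := fun ω i => W i ω with hV
    have hVm : Measurable V := measurable_pi_lambda _ hWm
    set μs : Fin (N + 1) → Measure ℝ := fun i => P.map (W i) with hμs
    have hprobs : ∀ i, IsProbabilityMeasure (μs i) := fun i => by
      rw [hμs]; exact Measure.isProbabilityMeasure_map (hWm i).aemeasurable
    haveI : ∀ i, SigmaFinite (μs i) := fun i => by
      haveI := hprobs i; infer_instance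
    have hmapV : P.map V = Measure.pi μs := by
      refine (Measure.pi_eq fun s hs => ?_).symm
      rw [Measure.map_apply hVm (MeasurableSet.univ_pi hs)]
      have hpre : V ⁻¹' Set.pi univ s = ⋂ i, W i ⁻¹' s i := by
        ext ω; simp [hV, Set.mem_pi]
      rw [hpre, hindep.meas_iInter fun i => ⟨s i, hs i, rfl⟩]
      exact Finset.prod_congr rfl fun i _ => (Measure.map_apply (hWm i) (hs i)).symm
    set T' : Set (ℝ × (Fin N → ℝ)) :=
      (Prod.fst ⁻¹' A) ∩ ⋂ n, (fun x : ℝ × (Fin N → ℝ) => (x.1, x.2 n)) ⁻¹' S n with hT'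
    have hT'meas : MeasurableSet T' := by
      refine (measurable_fst hA).inter (MeasurableSet.iInter fun n => ?_)
      exact (measurable_fst.prodMk ((measurable_pi_apply n).comp measurable_snd)) (hS n)
    set e := MeasurableEquiv.piFinSuccAbove (fun _ : Fin (N + 1) => ℝ) 0 with he
    have hmp := measurePreserving_piFinSuccAbove μs 0
    have hev : Y ⁻¹' A ∩ ⋂ n, {ω | (Y ω, ε n ω) ∈ S n} = V ⁻¹' (⇑e ⁻¹' T') := by
      ext ω
      simp [hV, hT', he, hW, MeasurableEquiv.piFinSuccAbove_apply, Fin.insertNthEquiv,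
        Fin.removeNth, Fin.succAbove_zero, Fin.tail, Fin.cons_succ, Fin.cons_zero]
    have h0 : μs 0 = μY := by rw [hμs, hμY, hW]; simp
    have hsucc : (fun j => μs ((0 : Fin (N + 1)).succAbove j)) = ν := by
      funext j
      rw [hμs, hν, hW]
      simp [Fin.succAbove_zero]
    have hsec : ∀ x : ℝ, (Measure.pi ν) (Prod.mk x ⁻¹' T')
        = A.indicator (fun x => ∏ n, ν n (Prod.mk x ⁻¹' S n)) x := by
      intro x
      by_cases hx : x ∈ A
      · have hps : Prod.mk x ⁻¹' T' = Set.pi univ fun n => Prod.mk x ⁻¹' S n := by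
          ext u; simp [hT', hx, Set.mem_pi]
        rw [hps, Measure.pi_pi, indicator_of_mem hx]
      · have hps : Prod.mk x ⁻¹' T' = ∅ := by
          ext u; simp [hT', hx]
        rw [hps, measure_empty, indicator_of_notMem hx]
    calc P (Y ⁻¹' A ∩ ⋂ n, {ω | (Y ω, ε n ω) ∈ S n})
        = (P.map V) (⇑e ⁻¹' T') := by
          rw [hev, Measure.map_apply hVm (e.measurable hT'meas)]
      _ = (Measure.map ⇑e (Measure.pi μs)) T' := by
          rw [hmapV, Measure.map_apply e.measurable hT'meas]
      _ = ((μs 0).prod (Measure.pi fun j => μs ((0 : Fin (N + 1)).succAbove j))) T' := by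
          rw [hmp.map_eq]
      _ = ∫⁻ x, (Measure.pi ν) (Prod.mk x ⁻¹' T') ∂μY := by
          rw [Measure.prod_apply hT'meas, h0, hsucc]
      _ = ∫⁻ x, A.indicator (fun x => ∏ n, ν n (Prod.mk x ⁻¹' S n)) x ∂μY :=
          lintegral_congr hsec
      _ = ∫⁻ y in A, ∏ n, ν n (Prod.mk y ⁻¹' S n) ∂μY := lintegral_indicator hA _
  -- transfer between integrals w.r.t. the law of Z and lintegrals w.r.t. the law of Y
  have transfer : ∀ B : Set ℝ, MeasurableSet B → ∀ F : ℝ → ℝ, Measurable F →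
      (∀ z, 0 ≤ F z) → (∀ z, F z ≤ 1) →
      ENNReal.ofReal (∫ z in B, F z ∂(P.map fun ω => g (Y ω)))
        = ∫⁻ y in g ⁻¹' B, ENNReal.ofReal (F (g y)) ∂μY := by
    intro B hB F hF hF0 hF1
    have hInt : Integrable F (((P.map fun ω => g (Y ω))).restrict B) := by
      refine (integrable_const (1 : ℝ)).mono' hF.aestronglyMeasurable (ae_of_all _ fun z => ?_)
      rw [Real.norm_eq_abs, abs_of_nonneg (hF0 z)]
      exact hF1 z
    rw [MeasureTheory.ofReal_integral_eq_lintegral_ofReal hInt (ae_of_all _ hF0),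
      setLIntegral_map hB hF.ennreal_ofReal hZm, hμY]
    exact (setLIntegral_map (hgm hB) (hF.comp hgm).ennreal_ofReal hY).symm
  have hDone : ∀ n ω, D n ω = 1 ↔ f n (Y ω, ε n ω) ≤ c n := by
    intro n ω
    rw [hD n ω, hX n ω]
    by_cases hc : f n (Y ω, ε n ω) ≤ c n <;> simp [hc]
  refine ⟨p, ⟨⟨?_, hZm, hpmeas, ?_, ?_, ?_, fun n z => ⟨hp0 n z, hp1 n z⟩, ?_, ?_⟩, hpmono⟩⟩
  · -- measD
    intro n
    have hDe : D n = fun ω => if X n ω ≤ c n then 1 else 0 := funext (hD n)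
    have hXe : X n = fun ω => f n (Y ω, ε n ω) := funext (hX n)
    have hXm : Measurable (X n) := by
      rw [hXe]; exact (hfmeas n).comp (hY.prodMk (hε n))
    rw [hDe]
    exact Measurable.ite (measurableSet_le hXm measurable_const)
      measurable_const measurable_const
  · -- values
    intro n ω
    rw [hD n ω]
    by_cases hc : X n ω ≤ c n
    · right; rw [if_pos hc]
    · left; rw [if_neg hc]
  · -- pi_mem
    intro n
    exact ⟨ENNReal.toReal_nonneg, by
      simpa using ENNReal.toReal_mono ENNReal.one_ne_top (prob_le_one (μ := P))⟩
  · -- prob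
    intro n
    exact (ENNReal.ofReal_toReal (measure_ne_top P _)).symm
  · -- condVersion
    intro n B hB
    set S : Fin N → Set (ℝ × ℝ) :=
      fun m => if m = n then {x : ℝ × ℝ | f m x ≤ c m} else univ with hSd
    have hSm' : ∀ m, MeasurableSet (S m) := fun m => by
      simp only [hSd]
      by_cases hmn : m = n
      · rw [if_pos hmn]; exact hSm m
      · rw [if_neg hmn]; exact MeasurableSet.univ
    have hev : {ω | D n ω = 1} ∩ (fun ω => g (Y ω)) ⁻¹' B
        = Y ⁻¹' (g ⁻¹' B) ∩ ⋂ m, {ω | (Y ω, ε m ω) ∈ S m} := by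
      rw [inter_comm]
      congr 1
      ext ω
      simp only [mem_iInter, mem_setOf_eq, hSd]
      constructor
      · intro hone m
        by_cases hmn : m = n
        · subst hmn; rw [if_pos rfl]; exact (hDone m ω).mp hone
        · rw [if_neg hmn]; trivial
      · intro hall
        have hn := hall n
        rw [if_pos rfl] at hn
        exact (hDone n ω).mpr hn
    rw [hev, key _ (hgm hB) S hSm', transfer B hB (p n) (hpmeas n) (hp0 n) (hp1 n)]
    refine lintegral_congr fun y => ?_
    rw [hpg n y, hq_eq n y]
    rw [Finset.prod_eq_single n (fun m _ hmn => ?_) (fun hn => absurd (Finset.mem_univ n) hn)]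
    · have hSe : S n = {x : ℝ × ℝ | f n x ≤ c n} := by simp [hSd]
      rw [hSe, hq]
    · rw [hSd]; simp [if_neg hmn]
  · -- condIndep
    intro d B hB
    set S : Fin N → Set (ℝ × ℝ) :=
      fun m => if d m then {x : ℝ × ℝ | f m x ≤ c m} else {x : ℝ × ℝ | f m x ≤ c m}ᶜ with hSd
    have hSm' : ∀ m, MeasurableSet (S m) := fun m => by
      cases hdm : d m <;> simp [hSd, hdm, hSm m, (hSm m).compl]
    have hev1 : ∀ m, {ω | D m ω = (if d m then (1:ℝ) else 0)} = {ω | (Y ω, ε m ω) ∈ S m} := by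
      intro m
      ext ω
      cases hdm : d m
      · simp only [hdm, if_false, mem_setOf_eq, hSd, Bool.false_eq_true, mem_compl_iff]
        rw [hD m ω, hX m ω]
        by_cases hc : f m (Y ω, ε m ω) ≤ c m <;> simp [hc]
      · simp only [hdm, if_true, mem_setOf_eq, hSd]
        exact hDone m ω
    have hiI : (⋂ m, {ω | D m ω = (if d m then (1:ℝ) else 0)})
        = ⋂ m, {ω | (Y ω, ε m ω) ∈ S m} := iInter_congr hev1
    have hev : (⋂ m, {ω | D m ω = (if d m then (1:ℝ) else 0)}) ∩ (fun ω => g (Y ω)) ⁻¹' B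
        = Y ⁻¹' (g ⁻¹' B) ∩ ⋂ m, {ω | (Y ω, ε m ω) ∈ S m} := by
      rw [inter_comm, hiI]; rfl
    have hFmeas : Measurable fun z => ∏ m, (if d m then p m z else 1 - p m z) := by
      refine Finset.measurable_prod _ fun m _ => ?_
      cases hdm : d m
      · simpa [hdm] using (hpmeas m).const_sub 1
      · simpa [hdm] using hpmeas m
    have hF0 : ∀ z, 0 ≤ ∏ m, (if d m then p m z else 1 - p m z) := fun z =>
      Finset.prod_nonneg fun m _ => by
        cases hdm : d m <;> simp [hdm, hp0 m z, sub_nonneg.mpr (hp1 m z)]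
    have hF1 : ∀ z, (∏ m, (if d m then p m z else 1 - p m z)) ≤ 1 := fun z =>
      Finset.prod_le_one
        (fun m _ => by cases hdm : d m <;> simp [hdm, hp0 m z, sub_nonneg.mpr (hp1 m z)])
        (fun m _ => by
          cases hdm : d m
          · simpa [hdm] using sub_le_self (1:ℝ) (hp0 m z)
          · simpa [hdm] using hp1 m z)
    rw [hev, key _ (hgm hB) S hSm', transfer B hB _ hFmeas hF0 hF1]
    refine lintegral_congr fun y => ?_
    rw [ENNReal.ofReal_prod_of_nonneg fun m _ => by
      cases hdm : d m <;> simp [hdm, hp0 m (g y), sub_nonneg.mpr (hp1 m (g y))]]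
    refine Finset.prod_congr rfl fun m _ => ?_
    cases hdm : d m
    · have hSe : S m = {x : ℝ × ℝ | f m x ≤ c m}ᶜ := by simp only [hSd]; simp [hdm]
      rw [if_neg (Bool.false_ne_true), hSe, preimage_compl,
        measure_compl ((hSm m).preimage measurable_prodMk_left) (hqne m y),
        measure_univ, hpg m y, ENNReal.ofReal_sub _ (hh0 m y), ENNReal.ofReal_one,
        hq_eq m y]
    · have hSe : S m = {x : ℝ × ℝ | f m x ≤ c m} := by simp only [hSd]; simp [hdm]
      rw [if_pos rfl, hSe, hpg m y]
      exact (hq_eq m y).symm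
end

section
/- Let (D_n, Z) and (D_n', Z') be pairs arising from stochastically increasing Bernoulli mixture models with the same default probability π_n ∈ (0,1), and suppose Z and Z' are equal in distribution. Then G_{D_n,Z}(s) ≥ G_{D_n',Z'}(s) for all s ∈ [0,1] if and only if P(D_n = 1, Z > z) ≤ P(D_n' = 1, Z' > z) for all z ∈ ℝ. -/
open MeasureTheory ProbabilityTheory Set

section AuxSection

open Filter Topology

namespace Aux

structure IsCDF (F : ℝ → ℝ) : Prop where
  mono : Monotone F
  rc : ∀ z, ContinuousWithinAt F (Ici z) z
  nonneg : ∀ z, 0 ≤ F z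
  le_one : ∀ z, F z ≤ 1
  bot : Tendsto F atBot (𝓝 0)
  top : Tendsto F atTop (𝓝 1)

variable {F : ℝ → ℝ}

theorem exists_mem (hF : IsCDF F) {t : ℝ} (ht : t < 1) : {x : ℝ | t ≤ F x}.Nonempty := by
  have : ∀ᶠ x in atTop, t ≤ F x := hF.top.eventually (eventually_ge_nhds ht)
  exact this.exists

theorem bddBelow_set (hF : IsCDF F) {t : ℝ} (ht : 0 < t) : BddBelow {x : ℝ | t ≤ F x} := by
  have : ∀ᶠ x in atBot, F x < t := hF.bot.eventually (eventually_lt_nhds ht)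
  obtain ⟨x₀, hx₀⟩ := this.exists
  refine ⟨x₀, fun x hx => ?_⟩
  by_contra hc
  exact absurd (le_trans hx (hF.mono (le_of_not_ge hc))) (not_le_of_gt hx₀)

/-- gap lemma -/
theorem qinv_eq {t z : ℝ} (h1 : ∀ w < z, F w < t) (h2 : t ≤ F z) : qinv F t = z := by
  have hsub : {x : ℝ | t ≤ F x} ⊆ Ici z := by
    intro x hx
    by_contra hc
    exact absurd hx (not_le_of_gt (h1 x (lt_of_not_ge hc)))
  refine le_antisymm (csInf_le ⟨z, hsub⟩ h2) (le_csInf ⟨z, h2⟩ hsub)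

theorem le_cdf_of_qinv_le (hF : IsCDF F) {t z : ℝ} (ht : t ∈ Ioo (0:ℝ) 1)
    (h : qinv F t ≤ z) : t ≤ F z := by
  have hne := exists_mem hF ht.2
  have key : ∀ x, z < x → t ≤ F x := by
    intro x hx
    obtain ⟨y, hy, hyx⟩ := exists_lt_of_csInf_lt hne (lt_of_le_of_lt h hx)
    exact le_trans hy (hF.mono hyx.le)
  have htd : Tendsto F (𝓝[>] z) (𝓝 (F z)) :=
    ((hF.rc z).mono Ioi_subset_Ici_self).tendsto
  exact ge_of_tendsto htd (eventually_nhdsWithin_of_forall fun x hx => key x hx)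

theorem qinv_le_iff (hF : IsCDF F) {t z : ℝ} (ht : t ∈ Ioo (0:ℝ) 1) :
    qinv F t ≤ z ↔ t ≤ F z :=
  ⟨le_cdf_of_qinv_le hF ht, fun h => csInf_le (bddBelow_set hF ht.1) h⟩

theorem le_cdf_qinv (hF : IsCDF F) {t : ℝ} (ht : t ∈ Ioo (0:ℝ) 1) : t ≤ F (qinv F t) :=
  le_cdf_of_qinv_le hF ht le_rfl

theorem qinv_monoOn (hF : IsCDF F) : MonotoneOn (qinv F) (Ioo (0:ℝ) 1) := by
  intro t ht t' ht' htt'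
  exact csInf_le_csInf (bddBelow_set hF ht.1) (exists_mem hF ht'.2)
    (fun x hx => le_trans htt' hx)

theorem isCDF_toReal (μ : Measure ℝ) [IsProbabilityMeasure μ] :
    IsCDF (fun z => (μ (Iic z)).toReal) := by
  have h : (fun z => (μ (Iic z)).toReal) = cdf μ := by
    funext z; exact (cdf_eq_real μ z).symm
  rw [h]
  exact ⟨monotone_cdf μ, (cdf μ).right_continuous, cdf_nonneg μ, cdf_le_one μ,
    tendsto_cdf_atBot μ, tendsto_cdf_atTop μ⟩

theorem qinv_aemeasurable (hF : IsCDF F) :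
    AEMeasurable (qinv F) (volume.restrict (Ioo (0:ℝ) 1)) :=
  aemeasurable_restrict_of_monotoneOn measurableSet_Ioo (qinv_monoOn hF)

theorem inter_Ioo_ae (c : ℝ) (h0 : 0 ≤ c) (h1 : c ≤ 1) :
    (Iic c ∩ Ioo (0:ℝ) 1 : Set ℝ) =ᵐ[volume] Ioc (0:ℝ) c := by
  rcases lt_or_eq_of_le h1 with h | h
  · have : (Iic c ∩ Ioo (0:ℝ) 1 : Set ℝ) = Ioc (0:ℝ) c := by
      ext t
      simp only [mem_inter_iff, mem_Iic, mem_Ioo, mem_Ioc]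
      exact ⟨fun ⟨a, b, _⟩ => ⟨b, a⟩, fun ⟨a, b⟩ => ⟨b, a, lt_of_le_of_lt b h⟩⟩
    rw [this]
    exact ae_eq_refl _
  · subst h
    have : (Iic (1:ℝ) ∩ Ioo (0:ℝ) 1 : Set ℝ) = Ioo (0:ℝ) 1 := by
      ext t; simp only [mem_inter_iff, mem_Iic, mem_Ioo]
      exact ⟨fun h => h.2, fun h => ⟨h.2.le, h⟩⟩
    rw [this]
    exact Ioo_ae_eq_Ioc

/-- `qinv F` pushes Lebesgue on `(0,1)` to `μ`. -/
theorem map_qinv (μ : Measure ℝ) [IsProbabilityMeasure μ]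
    (hF : IsCDF F) (hFμ : ∀ z, F z = (μ (Iic z)).toReal) :
    (volume.restrict (Ioo (0:ℝ) 1)).map (qinv F) = μ := by
  refine Measure.ext_of_Iic _ _ (fun z => ?_)
  rw [Measure.map_apply_of_aemeasurable (qinv_aemeasurable hF) measurableSet_Iic,
    Measure.restrict_apply' measurableSet_Ioo]
  have hset : (qinv F ⁻¹' Iic z) ∩ Ioo (0:ℝ) 1 = Iic (F z) ∩ Ioo (0:ℝ) 1 := by
    ext t
    simp only [mem_inter_iff, mem_preimage, mem_Iic, and_congr_left_iff]
    intro ht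
    exact qinv_le_iff hF ht
  rw [hset, measure_congr (inter_Ioo_ae (F z) (hF.nonneg z) (hF.le_one z)),
    Real.volume_Ioc, hFμ z, sub_zero, ENNReal.ofReal_toReal (measure_ne_top μ _)]

theorem setIntegral_Iic_eq (μ : Measure ℝ) [IsProbabilityMeasure μ]
    (hF : IsCDF F) (hFμ : ∀ z, F z = (μ (Iic z)).toReal)
    {p : ℝ → ℝ} (hp : Measurable p) (z : ℝ) :
    ∫ x in Iic z, p x ∂μ = ∫ t in (0:ℝ)..(F z), p (qinv F t) := by
  rw [← map_qinv μ hF hFμ,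
    setIntegral_map measurableSet_Iic hp.aestronglyMeasurable (qinv_aemeasurable hF),
    Measure.restrict_restrict' measurableSet_Ioo]
  have hset : (qinv F ⁻¹' Iic z) ∩ Ioo (0:ℝ) 1 = Iic (F z) ∩ Ioo (0:ℝ) 1 := by
    ext t
    simp only [mem_inter_iff, mem_preimage, mem_Iic, and_congr_left_iff]
    intro ht
    exact qinv_le_iff hF ht
  rw [hset, setIntegral_congr_set (inter_Ioo_ae (F z) (hF.nonneg z) (hF.le_one z)),
    intervalIntegral.integral_of_le (hF.nonneg z)]

theorem integral_eq (μ : Measure ℝ) [IsProbabilityMeasure μ]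
    (hF : IsCDF F) (hFμ : ∀ z, F z = (μ (Iic z)).toReal)
    {p : ℝ → ℝ} (hp : Measurable p) :
    ∫ x, p x ∂μ = ∫ t in (0:ℝ)..(1:ℝ), p (qinv F t) := by
  rw [← map_qinv μ hF hFμ,
    integral_map (qinv_aemeasurable hF) hp.aestronglyMeasurable,
    intervalIntegral.integral_of_le (zero_le_one),
    ← setIntegral_congr_set (Ioo_ae_eq_Ioc (a := (0:ℝ)) (b := 1))]

/-- Monotone global extension of `p ∘ qinv F`. -/
noncomputable def pext (F p : ℝ → ℝ) (t : ℝ) : ℝ :=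
  if t ≤ 0 then 0 else if 1 ≤ t then 1 else p (qinv F t)

theorem pext_mono (hF : IsCDF F) {p : ℝ → ℝ} (hp : Monotone p)
    (hp0 : ∀ z, 0 ≤ p z) (hp1 : ∀ z, p z ≤ 1) : Monotone (pext F p) := by
  intro t t' htt'
  unfold pext
  by_cases h1 : t ≤ 0
  · simp only [if_pos h1]
    by_cases h2 : t' ≤ 0
    · simp [if_pos h2]
    · rw [if_neg h2]
      by_cases h3 : (1:ℝ) ≤ t'
      · rw [if_pos h3]; norm_num
      · rw [if_neg h3]; exact hp0 _
  · rw [if_neg h1, if_neg (fun h => h1 (le_trans htt' h))]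
    by_cases h3 : (1:ℝ) ≤ t
    · rw [if_pos h3, if_pos (le_trans h3 htt')]
    · rw [if_neg h3]
      by_cases h4 : (1:ℝ) ≤ t'
      · rw [if_pos h4]; exact hp1 _
      · rw [if_neg h4]
        exact hp (qinv_monoOn hF ⟨lt_of_not_ge h1, lt_of_not_ge h3⟩
          ⟨lt_of_lt_of_le (lt_of_not_ge h1) htt', lt_of_not_ge h4⟩ htt')

theorem pext_eq {p : ℝ → ℝ} {t : ℝ} (h0 : 0 < t) (h1 : t < 1) :
    pext F p t = p (qinv F t) := by
  rw [pext, if_neg (not_le_of_gt h0), if_neg (not_le_of_gt h1)]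

theorem ae_ne_one : ∀ᵐ t : ℝ, t ≠ 1 := by
  refine ae_iff.mpr ?_
  have : {a : ℝ | ¬a ≠ 1} = {1} := by ext a; simp
  rw [this]
  exact Real.volume_singleton

/-- On `[0,1]`, the integral of `p ∘ qinv F` equals the integral of the extension. -/
theorem integral_pext {p : ℝ → ℝ} {s : ℝ} (hs0 : 0 ≤ s) (hs1 : s ≤ 1) :
    ∫ t in (0:ℝ)..s, p (qinv F t) = ∫ t in (0:ℝ)..s, pext F p t := by
  refine intervalIntegral.integral_congr_ae ?_
  filter_upwards [ae_ne_one] with t ht hmem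
  rw [uIoc_of_le hs0, mem_Ioc] at hmem
  rw [pext_eq hmem.1 (lt_of_le_of_ne (le_trans hmem.2 hs1) ht)]

/-- The integral of `pext` over a "gap" interval where `qinv` is constant. -/
theorem integral_pext_const {p : ℝ → ℝ} {u v z : ℝ} (hu : 0 ≤ u) (huv : u ≤ v) (hv : v ≤ 1)
    (hq : ∀ t, u < t → t ≤ v → qinv F t = z) :
    ∫ t in u..v, pext F p t = (v - u) * p z := by
  have : ∫ t in u..v, pext F p t = ∫ _ in u..v, p z := by
    refine intervalIntegral.integral_congr_ae ?_
    filter_upwards [ae_ne_one] with t ht hmem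
    rw [uIoc_of_le huv, mem_Ioc] at hmem
    rw [pext_eq (lt_of_le_of_lt hu hmem.1) (lt_of_le_of_ne (le_trans hmem.2 hv) ht),
      hq t hmem.1 hmem.2]
  rw [this, intervalIntegral.integral_const, smul_eq_mul]

/-- Integral of a function constant on a gap interval. -/
theorem integral_gap_const {g : ℝ → ℝ} (hg : Monotone g) {u v c : ℝ}
    (hu0 : 0 ≤ u) (huv : u ≤ v) (hv1 : v ≤ 1)
    (hconst : ∀ t, u < t → t < 1 → t ≤ v → g t = c) :
    ∫ t in u..v, g t = (v - u) * c := by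
  have : ∫ t in u..v, g t = ∫ _ in u..v, c := by
    refine intervalIntegral.integral_congr_ae ?_
    filter_upwards [ae_ne_one] with t ht hmem
    rw [uIoc_of_le huv, mem_Ioc] at hmem
    exact hconst t hmem.1 (lt_of_le_of_ne (le_trans hmem.2 hv1) ht) hmem.2
  rw [this, intervalIntegral.integral_const, smul_eq_mul]

/-- Core lemma: if `G' (F z) ≤ G (F z)` for every `z`, then `G' s ≤ G s` for
`s ∈ (0,1)`, where `G, G'` are primitives of monotone functions constant on
`qinv`-fibers. -/
theorem reverse_ext (hF : IsCDF F) {g g' : ℝ → ℝ}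
    (hg : Monotone g) (hg' : Monotone g') {s : ℝ} (hs0 : 0 < s) (hs1 : s < 1)
    (hH : ∀ z : ℝ, (∫ t in (0:ℝ)..(F z), g' t) ≤ ∫ t in (0:ℝ)..(F z), g t)
    (hgfib : ∀ t, 0 < t → t < 1 → qinv F t = qinv F s → g t = g s)
    (hg'fib : ∀ t, 0 < t → t < 1 → qinv F t = qinv F s → g' t = g' s) :
    (∫ t in (0:ℝ)..s, g' t) ≤ ∫ t in (0:ℝ)..s, g t := by
  set z := qinv F s with hzdef
  have hsFz : s ≤ F z := le_cdf_qinv hF ⟨hs0, hs1⟩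
  have hwlt : ∀ w, w < z → F w < s := by
    intro w hw
    by_contra hc
    exact absurd ((qinv_le_iff hF ⟨hs0, hs1⟩).mpr (le_of_not_gt hc)) (not_le_of_gt hw)
  set a := sSup (F '' Iio z) with hadef
  have hmem1 : F (z - 1) ∈ F '' Iio z := mem_image_of_mem F (by simp only [mem_Iio]; linarith)
  have himg : (F '' Iio z).Nonempty := ⟨F (z - 1), hmem1⟩
  have hbddA : BddAbove (F '' Iio z) := by
    refine ⟨1, fun y hy => ?_⟩
    obtain ⟨w, -, rfl⟩ := hy
    exact hF.le_one w
  have haS : a ≤ s := csSup_le himg (by rintro y ⟨w, hw, rfl⟩; exact (hwlt w hw).le)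
  have ha0 : 0 ≤ a := le_trans (hF.nonneg (z - 1)) (le_csSup hbddA hmem1)
  have hFz1 : F z ≤ 1 := hF.le_one z
  -- fibers: on (a, F z] ∩ (0,1), qinv F t = z
  have hq : ∀ t, a < t → t ≤ F z → qinv F t = z := by
    intro t h1t h2t
    exact qinv_eq (fun w hw => lt_of_le_of_lt (le_csSup hbddA (mem_image_of_mem F hw)) h1t) h2t
  -- interval integrability
  have hgint : ∀ u v : ℝ, IntervalIntegrable g volume u v := fun u v => hg.intervalIntegrable
  have hg'int : ∀ u v : ℝ, IntervalIntegrable g' volume u v := fun u v => hg'.intervalIntegrable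
  -- affine formulas
  have hGeq : ∀ v, a ≤ v → v ≤ F z →
      (∫ t in (0:ℝ)..v, g t) = (∫ t in (0:ℝ)..a, g t) + (v - a) * g s := by
    intro v hav hvF
    rw [← intervalIntegral.integral_add_adjacent_intervals (hgint 0 a) (hgint a v)]
    congr 1
    refine integral_gap_const hg ha0 hav (le_trans hvF hFz1) (fun t h1t h2t h3t => ?_)
    exact hgfib t (lt_of_le_of_lt ha0 h1t) h2t (hq t h1t (le_trans h3t hvF))
  have hGeq' : ∀ v, a ≤ v → v ≤ F z →
      (∫ t in (0:ℝ)..v, g' t) = (∫ t in (0:ℝ)..a, g' t) + (v - a) * g' s := by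
    intro v hav hvF
    rw [← intervalIntegral.integral_add_adjacent_intervals (hg'int 0 a) (hg'int a v)]
    congr 1
    refine integral_gap_const hg' ha0 hav (le_trans hvF hFz1) (fun t h1t h2t h3t => ?_)
    exact hg'fib t (lt_of_le_of_lt ha0 h1t) h2t (hq t h1t (le_trans h3t hvF))
  -- H a ≥ 0 by continuity from the left
  have htendF : Tendsto F (𝓝[<] z) (𝓝 a) := hF.mono.tendsto_nhdsLT z
  have hGc : Continuous (fun x => (∫ t in (0:ℝ)..x, g t) - ∫ t in (0:ℝ)..x, g' t) :=
    (intervalIntegral.continuous_primitive hgint 0).sub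
      (intervalIntegral.continuous_primitive hg'int 0)
  have hHa : (∫ t in (0:ℝ)..a, g' t) ≤ ∫ t in (0:ℝ)..a, g t := by
    have ht2 : Tendsto (fun w => (∫ t in (0:ℝ)..(F w), g t) - ∫ t in (0:ℝ)..(F w), g' t)
        (𝓝[<] z) (𝓝 ((∫ t in (0:ℝ)..a, g t) - ∫ t in (0:ℝ)..a, g' t)) :=
      (hGc.tendsto a).comp htendF
    have hge := ge_of_tendsto ht2 (Eventually.of_forall fun w => sub_nonneg.mpr (hH w))
    linarith
  -- conclусion
  have hGs := hGeq s haS hsFz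
  have hGb := hGeq (F z) (le_trans haS hsFz) le_rfl
  have hGs' := hGeq' s haS hsFz
  have hGb' := hGeq' (F z) (le_trans haS hsFz) le_rfl
  have hHb := hH z
  rcases le_or_gt (g' s) (g s) with hc | hc
  · have := mul_nonneg (sub_nonneg.mpr haS) (sub_nonneg.mpr hc)
    nlinarith
  · have h1 : (s - a) * (g s - g' s) ≥ (F z - a) * (g s - g' s) := by
      apply mul_le_mul_of_nonpos_right (by linarith) (by linarith)
    nlinarith


end Aux

end AuxSection

/-- Remark (b): if `Z =_d Z'`, the pointwise ordering of the default
integral functions `G_{D,Z} ≥ G_{D',Z'}` is equivalent to the upper orthant ordering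
`P(D = 1, Z > z) ≤ P(D' = 1, Z' > z)` for all `z`. -/
theorem stmt13 {Ω : Type*} [MeasurableSpace Ω] (P : MeasureTheory.Measure Ω)
    [MeasureTheory.IsProbabilityMeasure P] (hP : MeasureAtomless P)
    (D D' : Ω → ℝ) (Z Z' : Ω → ℝ) (π : ℝ) (hπ : π ∈ Set.Ioo (0:ℝ) 1) (p p' : ℝ → ℝ)
    (hM : IsSIBMM P (fun _ : Fin 1 => D) Z (fun _ => π) (fun _ => p))
    (hM' : IsSIBMM P (fun _ : Fin 1 => D') Z' (fun _ => π) (fun _ => p'))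
    (hZZ' : P.map Z = P.map Z') :
    (∀ s ∈ Set.Icc (0:ℝ) 1, defaultIntegral P Z' p' s ≤ defaultIntegral P Z p s) ↔
    (∀ z : ℝ, P ({ω | D ω = 1} ∩ {ω | z < Z ω})
      ≤ P ({ω | D' ω = 1} ∩ {ω | z < Z' ω})) := by
  have hZ := hM.measZ
  have hZ' := hM'.measZ
  set μ : Measure ℝ := P.map Z with hμdef
  haveI : IsProbabilityMeasure μ := Measure.isProbabilityMeasure_map hZ.aemeasurable
  set F : ℝ → ℝ := distFun P Z with hFdef
  have hFμ : ∀ z, F z = (μ (Iic z)).toReal := by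
    intro z
    rw [hFdef, distFun]
    congr 1
    rw [hμdef, Measure.map_apply hZ measurableSet_Iic]
    rfl
  have hF : Aux.IsCDF F := by
    have h1 := Aux.isCDF_toReal μ
    have heq : F = fun z => (μ (Iic z)).toReal := funext hFμ
    rw [heq]; exact h1
  have hF' : distFun P Z' = F := by
    funext z
    rw [distFun, hFμ z, hZZ']
    congr 1
    rw [Measure.map_apply hZ' measurableSet_Iic]
    rfl
  -- facts about p and p'
  have hp : Measurable p := hM.measp 0
  have hp' : Measurable p' := hM'.measp 0
  have hpmem : ∀ x, p x ∈ Icc (0:ℝ) 1 := hM.p_mem 0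
  have hp'mem : ∀ x, p' x ∈ Icc (0:ℝ) 1 := hM'.p_mem 0
  have hpint : Integrable p μ := by
    refine (integrable_const (1:ℝ)).mono' hp.aestronglyMeasurable ?_
    exact Filter.Eventually.of_forall fun x => by
      rw [Real.norm_eq_abs, abs_of_nonneg (hpmem x).1]; exact (hpmem x).2
  have hp'int : Integrable p' μ := by
    refine (integrable_const (1:ℝ)).mono' hp'.aestronglyMeasurable ?_
    exact Filter.Eventually.of_forall fun x => by
      rw [Real.norm_eq_abs, abs_of_nonneg (hp'mem x).1]; exact (hp'mem x).2
  -- total mass π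
  have htot : ∫ x, p x ∂μ = π := by
    have hcv : P ({ω | D ω = 1} ∩ Z ⁻¹' univ)
        = ENNReal.ofReal (∫ x in univ, p x ∂(P.map Z)) :=
      hM.condVersion 0 univ MeasurableSet.univ
    rw [preimage_univ, inter_univ, setIntegral_univ, hM.prob 0] at hcv
    have h1 := congrArg ENNReal.toReal hcv
    rwa [ENNReal.toReal_ofReal hπ.1.le,
      ENNReal.toReal_ofReal (integral_nonneg fun x => (hpmem x).1), eq_comm] at h1
  have htot' : ∫ x, p' x ∂μ = π := by
    have hcv : P ({ω | D' ω = 1} ∩ Z' ⁻¹' univ)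
        = ENNReal.ofReal (∫ x in univ, p' x ∂(P.map Z')) :=
      hM'.condVersion 0 univ MeasurableSet.univ
    rw [preimage_univ, inter_univ, setIntegral_univ, hM'.prob 0, ← hZZ'] at hcv
    have h1 := congrArg ENNReal.toReal hcv
    rwa [ENNReal.toReal_ofReal hπ.1.le,
      ENNReal.toReal_ofReal (integral_nonneg fun x => (hp'mem x).1), eq_comm] at h1
  -- default integral at F z
  have hdI : ∀ z, defaultIntegral P Z p (F z) = ∫ x in Iic z, p x ∂μ := by
    intro z
    rw [defaultIntegral, ← hFdef, Aux.setIntegral_Iic_eq μ hF hFμ hp z]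
  have hdI' : ∀ z, defaultIntegral P Z' p' (F z) = ∫ x in Iic z, p' x ∂μ := by
    intro z
    rw [defaultIntegral, hF', Aux.setIntegral_Iic_eq μ hF hFμ hp' z]
  -- upper-orthant probabilities
  have key : ∀ z, P ({ω | D ω = 1} ∩ {ω | z < Z ω})
      = ENNReal.ofReal (π - defaultIntegral P Z p (F z)) := by
    intro z
    have hcv : P ({ω | D ω = 1} ∩ Z ⁻¹' Ioi z)
        = ENNReal.ofReal (∫ x in Ioi z, p x ∂(P.map Z)) :=
      hM.condVersion 0 (Ioi z) measurableSet_Ioi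
    have hsplit := integral_add_compl (s := Iic z) measurableSet_Iic hpint
    rw [compl_Iic] at hsplit
    have hIoi : ∫ x in Ioi z, p x ∂μ = π - defaultIntegral P Z p (F z) := by
      rw [hdI z]; linarith [hsplit, htot]
    rw [← hIoi]
    exact hcv
  have key' : ∀ z, P ({ω | D' ω = 1} ∩ {ω | z < Z' ω})
      = ENNReal.ofReal (π - defaultIntegral P Z' p' (F z)) := by
    intro z
    have hcv : P ({ω | D' ω = 1} ∩ Z' ⁻¹' Ioi z)
        = ENNReal.ofReal (∫ x in Ioi z, p' x ∂(P.map Z')) :=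
      hM'.condVersion 0 (Ioi z) measurableSet_Ioi
    rw [← hZZ'] at hcv
    have hsplit := integral_add_compl (s := Iic z) measurableSet_Iic hp'int
    rw [compl_Iic] at hsplit
    have hIoi : ∫ x in Ioi z, p' x ∂μ = π - defaultIntegral P Z' p' (F z) := by
      rw [hdI' z]; linarith [hsplit, htot']
    rw [← hIoi]
    exact hcv
  have hle_pi : ∀ z, defaultIntegral P Z' p' (F z) ≤ π := by
    intro z
    rw [hdI' z, ← htot']
    exact setIntegral_le_integral hp'int
      (Filter.Eventually.of_forall fun x => (hp'mem x).1)
  constructor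
  · intro h z
    rw [key z, key' z]
    have hs := h (F z) ⟨hF.nonneg z, hF.le_one z⟩
    exact ENNReal.ofReal_le_ofReal (by linarith)
  · intro h s hs
    have hFle : ∀ z, defaultIntegral P Z' p' (F z) ≤ defaultIntegral P Z p (F z) := by
      intro z
      have h1 := h z
      rw [key z, key' z] at h1
      have h2 := hle_pi z
      have h3 := (ENNReal.ofReal_le_ofReal_iff (by linarith)).mp h1
      linarith
    rcases eq_or_lt_of_le hs.1 with h0 | h0
    · rw [← h0]
      simp [defaultIntegral]
    rcases eq_or_lt_of_le hs.2 with h1 | h1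
    · -- s = 1
      have e1 : defaultIntegral P Z p 1 = π := by
        rw [defaultIntegral, ← hFdef, ← Aux.integral_eq μ hF hFμ hp, htot]
      have e2 : defaultIntegral P Z' p' 1 = π := by
        rw [defaultIntegral, hF', ← Aux.integral_eq μ hF hFμ hp', htot']
      rw [h1, e1, e2]
    · -- 0 < s < 1
      have hgm : Monotone (Aux.pext F p) :=
        Aux.pext_mono hF (hM.mono 0) (fun x => (hpmem x).1) (fun x => (hpmem x).2)
      have hg'm : Monotone (Aux.pext F p') :=
        Aux.pext_mono hF (hM'.mono 0) (fun x => (hp'mem x).1) (fun x => (hp'mem x).2)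
      have hconv : ∀ x, 0 ≤ x → x ≤ 1 →
          defaultIntegral P Z p x = ∫ t in (0:ℝ)..x, Aux.pext F p t := by
        intro x hx0 hx1
        rw [defaultIntegral, ← hFdef]
        exact Aux.integral_pext hx0 hx1
      have hconv' : ∀ x, 0 ≤ x → x ≤ 1 →
          defaultIntegral P Z' p' x = ∫ t in (0:ℝ)..x, Aux.pext F p' t := by
        intro x hx0 hx1
        rw [defaultIntegral, hF']
        exact Aux.integral_pext hx0 hx1
      rw [hconv s hs.1 hs.2, hconv' s hs.1 hs.2]
      refine Aux.reverse_ext hF hgm hg'm h0 h1 (fun z => ?_) ?_ ?_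
      · rw [← hconv (F z) (hF.nonneg z) (hF.le_one z),
          ← hconv' (F z) (hF.nonneg z) (hF.le_one z)]
        exact hFle z
      · intro t ht0 ht1 hfib
        rw [Aux.pext_eq ht0 ht1, Aux.pext_eq h0 h1, hfib]
      · intro t ht0 ht1 hfib
        rw [Aux.pext_eq ht0 ht1, Aux.pext_eq h0 h1, hfib]
end

section
/- Let (D, Z) be a pair of random variables where D takes values in {0,1} with P(D = 1) = π ∈ (0,1) and Z has a continuous distribution function F_Z. Let C be a copula of (D, Z). Then the default integral function satisfies G_{D,Z}(t) = t − C(1 − π, t) for all t ∈ [0,1]. -/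
open MeasureTheory ProbabilityTheory Set

section Stmt14Aux

open Filter Topology

/-- Generalized-inverse characterization: for `t ∈ (0,1)`,
`qinv F t ≤ z ↔ t ≤ F z` when `F` is a continuous distribution function. -/
lemma stmt14_qinv_le_iff {F : ℝ → ℝ} (hmono : Monotone F) (hcont : Continuous F)
    (h0 : Tendsto F atBot (𝓝 0)) (h1 : Tendsto F atTop (𝓝 1))
    {t : ℝ} (ht : t ∈ Ioo (0:ℝ) 1) (z : ℝ) :
    qinv F t ≤ z ↔ t ≤ F z := by
  have hbdd : BddBelow {x : ℝ | t ≤ F x} := by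
    obtain ⟨x₀, hx₀⟩ := (h0.eventually (eventually_lt_nhds ht.1)).exists
    exact ⟨x₀, fun y hy => not_lt.1 fun hlt =>
      absurd (le_trans hy (hmono hlt.le)) (not_le.2 hx₀)⟩
  unfold qinv
  constructor
  · intro h
    have hne : {x : ℝ | t ≤ F x}.Nonempty := (h1.eventually (eventually_ge_nhds ht.2)).exists
    have hclosed : IsClosed {x : ℝ | t ≤ F x} := isClosed_le continuous_const hcont
    have hmem : t ≤ F (sInf {x : ℝ | t ≤ F x}) := hclosed.csInf_mem hne hbdd
    exact hmem.trans (hmono h)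
  · intro h
    exact csInf_le hbdd h

lemma stmt14_vol_inter {c : ℝ} (hc : c ∈ Icc (0:ℝ) 1) :
    volume (Ioo (0:ℝ) 1 ∩ Iic c) = ENNReal.ofReal c := by
  rcases eq_or_lt_of_le hc.2 with h1 | h1
  · have hset : Ioo (0:ℝ) 1 ∩ Iic c = Ioo 0 1 := by
      ext s
      simp only [mem_inter_iff, mem_Ioo, mem_Iic]
      exact ⟨fun h => h.1, fun h => ⟨h, h1 ▸ h.2.le⟩⟩
    rw [hset, Real.volume_Ioo, ← h1]
    norm_num
  · have hset : Ioo (0:ℝ) 1 ∩ Iic c = Ioc 0 c := by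
      ext s
      simp only [mem_inter_iff, mem_Ioo, mem_Iic, mem_Ioc]
      exact ⟨fun h => ⟨h.1.1, h.2⟩, fun h => ⟨⟨h.1, lt_of_le_of_lt h.2 h1⟩, h.2⟩⟩
    rw [hset, Real.volume_Ioc]
    norm_num

lemma stmt14_ae_set {c : ℝ} (hc : c ∈ Icc (0:ℝ) 1) :
    (Ioc (0:ℝ) c : Set ℝ) =ᵐ[volume] (Ioo (0:ℝ) 1 ∩ Iic c : Set ℝ) := by
  refine MeasureTheory.ae_eq_set.2 ⟨?_, ?_⟩
  · refine measure_mono_null (t := ({1} : Set ℝ)) (fun s hs => ?_) Real.volume_singleton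
    obtain ⟨⟨hs0, hsc⟩, hnot⟩ := hs
    by_contra hne
    have hne1 : s ≠ 1 := by simpa using hne
    exact hnot ⟨⟨hs0, lt_of_le_of_ne (hsc.trans hc.2) hne1⟩, hsc⟩
  · have hsub : Ioo (0:ℝ) 1 ∩ Iic c ⊆ Ioc 0 c := fun s hs => ⟨hs.1.1, hs.2⟩
    rw [Set.diff_eq_empty.2 hsub]
    exact measure_empty

/-- Measurable modification of the generalized inverse, equal to it on `(0,1)`. -/
noncomputable def stmt14g (F : ℝ → ℝ) : ℝ → ℝ :=
  fun s => if s ∈ Ioo (0:ℝ) 1 then qinv F s else 0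

lemma stmt14g_eq {F : ℝ → ℝ} {s : ℝ} (hs : s ∈ Ioo (0:ℝ) 1) : stmt14g F s = qinv F s :=
  if_pos hs

lemma stmt14g_measurable {F : ℝ → ℝ} (hmono : Monotone F) (hcont : Continuous F)
    (h0 : Tendsto F atBot (𝓝 0)) (h1 : Tendsto F atTop (𝓝 1)) :
    Measurable (stmt14g F) := by
  apply measurable_of_Iic
  intro a
  have hiff : ∀ s ∈ Ioo (0:ℝ) 1, (qinv F s ≤ a ↔ s ≤ F a) := fun s hs =>
    stmt14_qinv_le_iff hmono hcont h0 h1 hs a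
  have hset : stmt14g F ⁻¹' Iic a =
      (Ioo (0:ℝ) 1 ∩ Iic (F a)) ∪ (if (0:ℝ) ≤ a then (Ioo (0:ℝ) 1)ᶜ else ∅) := by
    ext s
    by_cases hs : s ∈ Ioo (0:ℝ) 1 <;> by_cases ha : (0:ℝ) ≤ a <;>
      simp [stmt14g, hs, ha, hiff s]
  rw [hset]
  refine (measurableSet_Ioo.inter measurableSet_Iic).union ?_
  split_ifs
  · exact measurableSet_Ioo.compl
  · exact MeasurableSet.empty

lemma stmt14_map_eq {F : ℝ → ℝ} (hmono : Monotone F) (hcont : Continuous F)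
    (h0 : Tendsto F atBot (𝓝 0)) (h1 : Tendsto F atTop (𝓝 1))
    (hF01 : ∀ z, F z ∈ Icc (0:ℝ) 1)
    (μ : MeasureTheory.Measure ℝ) [MeasureTheory.IsProbabilityMeasure μ]
    (hμ : ∀ z, μ (Iic z) = ENNReal.ofReal (F z)) :
    (MeasureTheory.volume.restrict (Ioo (0:ℝ) 1)).map (stmt14g F) = μ := by
  have hgmeas : Measurable (stmt14g F) := stmt14g_measurable hmono hcont h0 h1
  haveI : MeasureTheory.IsFiniteMeasure (MeasureTheory.volume.restrict (Ioo (0:ℝ) 1)) := by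
    constructor
    rw [MeasureTheory.Measure.restrict_apply_univ, Real.volume_Ioo]
    norm_num
  refine MeasureTheory.Measure.ext_of_Iic _ _ (fun a => ?_)
  rw [MeasureTheory.Measure.map_apply hgmeas measurableSet_Iic,
    MeasureTheory.Measure.restrict_apply (hgmeas measurableSet_Iic), hμ a]
  have hiff : ∀ s ∈ Ioo (0:ℝ) 1, (qinv F s ≤ a ↔ s ≤ F a) := fun s hs =>
    stmt14_qinv_le_iff hmono hcont h0 h1 hs a
  have hset : stmt14g F ⁻¹' Iic a ∩ Ioo 0 1 = Ioo (0:ℝ) 1 ∩ Iic (F a) := by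
    ext s
    constructor
    · rintro ⟨hsa, hs⟩
      refine ⟨hs, ?_⟩
      have : qinv F s ≤ a := by rwa [mem_preimage, mem_Iic, stmt14g_eq hs] at hsa
      exact (hiff s hs).1 this
    · rintro ⟨hs, hsa⟩
      exact ⟨by rw [mem_preimage, mem_Iic, stmt14g_eq hs]; exact (hiff s hs).2 hsa, hs⟩
  rw [hset, stmt14_vol_inter (hF01 a)]

lemma stmt14_key {F : ℝ → ℝ} {c : ℝ} (hc : c ∈ Icc (0:ℝ) 1) (p : ℝ → ℝ) :
    (∫ t in (0:ℝ)..c, p (qinv F t)) =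
      ∫ t, (Iic c).indicator (fun s => p (stmt14g F s)) t
        ∂(MeasureTheory.volume.restrict (Ioo (0:ℝ) 1)) := by
  rw [intervalIntegral.integral_of_le hc.1,
    MeasureTheory.integral_indicator measurableSet_Iic,
    MeasureTheory.Measure.restrict_restrict measurableSet_Iic, Set.inter_comm,
    MeasureTheory.Measure.restrict_congr_set (stmt14_ae_set hc).symm]
  refine MeasureTheory.integral_congr_ae ?_
  have hone : (MeasureTheory.volume.restrict (Ioc (0:ℝ) c)) {(1:ℝ)} = 0 := by
    rw [MeasureTheory.Measure.restrict_apply (measurableSet_singleton 1)]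
    exact measure_mono_null inter_subset_left Real.volume_singleton
  have hne : ∀ᵐ t ∂(MeasureTheory.volume.restrict (Ioc (0:ℝ) c)), t ≠ (1:ℝ) := by
    rw [MeasureTheory.ae_iff]
    convert hone using 2
    ext s
    simp
  filter_upwards [MeasureTheory.ae_restrict_mem measurableSet_Ioc, hne] with t htmem htne
  rw [stmt14g_eq ⟨htmem.1, lt_of_le_of_ne (htmem.2.trans hc.2) htne⟩]

theorem stmt14_transport {F : ℝ → ℝ} (hmono : Monotone F) (hcont : Continuous F)
    (h0 : Tendsto F atBot (𝓝 0)) (h1 : Tendsto F atTop (𝓝 1))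
    (hF01 : ∀ z, F z ∈ Icc (0:ℝ) 1)
    (μ : MeasureTheory.Measure ℝ) [MeasureTheory.IsProbabilityMeasure μ]
    (hμ : ∀ z, μ (Iic z) = ENNReal.ofReal (F z))
    (p : ℝ → ℝ) (hp : Measurable p) :
    (∀ z, (∫ t in (0:ℝ)..(F z), p (qinv F t)) = ∫ x in Iic z, p x ∂μ) ∧
      ((∫ t in (0:ℝ)..(1:ℝ), p (qinv F t)) = ∫ x, p x ∂μ) := by
  have hgmeas : Measurable (stmt14g F) := stmt14g_measurable hmono hcont h0 h1
  have hmap := stmt14_map_eq hmono hcont h0 h1 hF01 μ hμ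
  constructor
  · intro z
    rw [← hmap, ← MeasureTheory.integral_indicator measurableSet_Iic,
      MeasureTheory.integral_map hgmeas.aemeasurable
        ((hp.indicator measurableSet_Iic).aestronglyMeasurable),
      stmt14_key (hF01 z) p]
    refine MeasureTheory.integral_congr_ae ?_
    filter_upwards [MeasureTheory.ae_restrict_mem measurableSet_Ioo] with t htI
    have hiff : qinv F t ≤ z ↔ t ≤ F z := stmt14_qinv_le_iff hmono hcont h0 h1 htI z
    by_cases h : t ≤ F z
    · rw [Set.indicator_of_mem (mem_Iic.2 h),
        Set.indicator_of_mem (mem_Iic.2 (by rw [stmt14g_eq htI]; exact hiff.2 h))]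
    · rw [Set.indicator_of_notMem (fun hmem => h (mem_Iic.1 hmem)),
        Set.indicator_of_notMem (fun hmem => h (hiff.1 (by rw [← stmt14g_eq htI]; exact mem_Iic.1 hmem)))]
  · rw [← hmap, MeasureTheory.integral_map hgmeas.aemeasurable hp.aestronglyMeasurable,
      stmt14_key ⟨zero_le_one, le_refl (1:ℝ)⟩ p]
    refine MeasureTheory.integral_congr_ae ?_
    filter_upwards [MeasureTheory.ae_restrict_mem measurableSet_Ioo] with t htI
    rw [Set.indicator_of_mem (mem_Iic.2 htI.2.le)]

end Stmt14Aux

/-- if `D ∈ {0,1}` with `P(D = 1) = π ∈ (0,1)`, `Z` has a continuous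
distribution function and `C` is a copula of `(D, Z)`, then the default integral function
satisfies `G_{D,Z}(t) = t − C(1 − π, t)` for all `t ∈ [0,1]`. -/
theorem stmt14 {Ω : Type*} [MeasurableSpace Ω] (P : MeasureTheory.Measure Ω)
    [MeasureTheory.IsProbabilityMeasure P] (hP : MeasureAtomless P)
    (D Z : Ω → ℝ) (hD : Measurable D) (hZ : Measurable Z)
    (hvals : ∀ ω, D ω = 0 ∨ D ω = 1)
    (π : ℝ) (hπ : π ∈ Set.Ioo (0:ℝ) 1)
    (hprob : P {ω | D ω = 1} = ENNReal.ofReal π)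
    (hFcont : Continuous (distFun P Z))
    (p : ℝ → ℝ) (hp : Measurable p) (hpmem : ∀ z, p z ∈ Set.Icc (0:ℝ) 1)
    (hver : ∀ B : Set ℝ, MeasurableSet B →
      P ({ω | D ω = 1} ∩ Z ⁻¹' B) = ENNReal.ofReal (∫ z in B, p z ∂(P.map Z)))
    (C : ℝ → ℝ → ℝ) (hC : IsCopula C)
    (hcop : ∀ x z : ℝ, P ({ω | D ω ≤ x} ∩ {ω | Z ω ≤ z})
      = ENNReal.ofReal (C (distFun P D x) (distFun P Z z))) :
    ∀ t ∈ Set.Icc (0:ℝ) 1, defaultIntegral P Z p t = t - C (1 - π) t := by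
  classical
  haveI hPM : MeasureTheory.IsProbabilityMeasure (P.map Z) :=
    MeasureTheory.Measure.isProbabilityMeasure_map hZ.aemeasurable
  have hπ1 : (1 - π) ∈ Set.Icc (0:ℝ) 1 := ⟨by linarith [hπ.2], by linarith [hπ.1]⟩
  -- copula nonnegativity
  have hCnonneg : ∀ u ∈ Set.Icc (0:ℝ) 1, ∀ v ∈ Set.Icc (0:ℝ) 1, 0 ≤ C u v := by
    intro u hu v hv
    have h2 := hC.2.2 0 u 0 v ⟨le_refl 0, zero_le_one⟩ hu ⟨le_refl 0, zero_le_one⟩ hv hu.1 hv.1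
    have h0v := (hC.2.1 v hv).1
    have hu0 := (hC.1 u hu).1
    have h00 := (hC.2.1 0 ⟨le_refl 0, zero_le_one⟩).1
    linarith
  -- facts about F = distFun P Z
  have hμiic : ∀ z, P.map Z (Set.Iic z) = ENNReal.ofReal (distFun P Z z) := by
    intro z
    rw [MeasureTheory.Measure.map_apply hZ measurableSet_Iic]
    rw [distFun, ENNReal.ofReal_toReal (MeasureTheory.measure_ne_top _ _)]
    rfl
  have hFeq : distFun P Z = fun z => ProbabilityTheory.cdf (P.map Z) z := by
    funext z
    have hnn : (0:ℝ) ≤ distFun P Z z := ENNReal.toReal_nonneg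
    rw [ProbabilityTheory.cdf_eq_real, MeasureTheory.measureReal_def, hμiic z, ENNReal.toReal_ofReal hnn]
  have hFmono : Monotone (distFun P Z) := by
    rw [hFeq]; exact ProbabilityTheory.monotone_cdf _
  have hF0 : Filter.Tendsto (distFun P Z) Filter.atBot (nhds 0) := by
    rw [hFeq]; exact ProbabilityTheory.tendsto_cdf_atBot _
  have hF1 : Filter.Tendsto (distFun P Z) Filter.atTop (nhds 1) := by
    rw [hFeq]; exact ProbabilityTheory.tendsto_cdf_atTop _
  have hFmem : ∀ z, distFun P Z z ∈ Set.Icc (0:ℝ) 1 := by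
    intro z
    refine ⟨ENNReal.toReal_nonneg, ?_⟩
    have hle := ENNReal.toReal_mono ENNReal.one_ne_top
      (MeasureTheory.prob_le_one (μ := P) (s := {ω | Z ω ≤ z}))
    simpa [distFun] using hle
  -- transport lemma
  have htrans := stmt14_transport hFmono hFcont hF0 hF1 hFmem (P.map Z) hμiic p hp
  -- Step A: the conditional integral identity
  have hD1meas : MeasurableSet {ω | D ω = 1} := hD (measurableSet_singleton 1)
  have hDle0 : {ω | D ω ≤ 0} = {ω | D ω = 1}ᶜ := by
    ext ω
    rcases hvals ω with h | h <;> simp [h]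
  have hFD0 : distFun P D 0 = 1 - π := by
    have hPD0 : P {ω | D ω ≤ 0} = ENNReal.ofReal (1 - π) := by
      rw [hDle0, MeasureTheory.measure_compl hD1meas (MeasureTheory.measure_ne_top _ _),
        MeasureTheory.measure_univ, hprob, ENNReal.ofReal_sub 1 hπ.1.le, ENNReal.ofReal_one]
    rw [distFun, hPD0, ENNReal.toReal_ofReal (by linarith [hπ.2])]
  have hunion : ∀ z, {ω | Z ω ≤ z} =
      ({ω | D ω ≤ 0} ∩ {ω | Z ω ≤ z}) ∪ ({ω | D ω = 1} ∩ Z ⁻¹' Set.Iic z) := by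
    intro z
    ext ω
    simp only [Set.mem_setOf_eq, Set.mem_union, Set.mem_inter_iff, Set.mem_preimage, Set.mem_Iic]
    rcases hvals ω with h | h <;> simp [h]
  have hdisj : ∀ z, Disjoint ({ω | D ω ≤ 0} ∩ {ω | Z ω ≤ z})
      ({ω | D ω = 1} ∩ Z ⁻¹' Set.Iic z) := by
    intro z
    refine Set.disjoint_left.2 fun ω hω hω' => ?_
    have h1 : D ω ≤ 0 := hω.1
    have h2 : D ω = 1 := hω'.1
    rw [h2] at h1
    linarith
  have hA : ∀ z, (∫ x in Set.Iic z, p x ∂(P.map Z)) =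
      distFun P Z z - C (1 - π) (distFun P Z z) := by
    intro z
    have hCz : 0 ≤ C (1 - π) (distFun P Z z) := hCnonneg _ hπ1 _ (hFmem z)
    have hIz : 0 ≤ ∫ x in Set.Iic z, p x ∂(P.map Z) :=
      MeasureTheory.integral_nonneg fun x => (hpmem x).1
    have hmeq : P {ω | Z ω ≤ z} = ENNReal.ofReal (C (1 - π) (distFun P Z z))
        + ENNReal.ofReal (∫ x in Set.Iic z, p x ∂(P.map Z)) := by
      rw [hunion z, MeasureTheory.measure_union (hdisj z) (hD1meas.inter (hZ measurableSet_Iic)),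
        hver (Set.Iic z) measurableSet_Iic, hcop 0 z, hFD0]
    have hPz : P {ω | Z ω ≤ z} = ENNReal.ofReal (distFun P Z z) := by
      rw [distFun, ENNReal.ofReal_toReal (MeasureTheory.measure_ne_top _ _)]
    rw [hPz, ← ENNReal.ofReal_add hCz hIz] at hmeq
    have heq := (ENNReal.ofReal_eq_ofReal_iff (hFmem z).1 (add_nonneg hCz hIz)).1 hmeq
    linarith
  -- total mass
  have hint : (∫ x, p x ∂(P.map Z)) = π := by
    have h := hver Set.univ MeasurableSet.univ
    rw [Set.preimage_univ, Set.inter_univ, hprob, MeasureTheory.Measure.restrict_univ] at h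
    exact ((ENNReal.ofReal_eq_ofReal_iff hπ.1.le
      (MeasureTheory.integral_nonneg fun x => (hpmem x).1)).1 h).symm
  -- final assembly
  intro t ht
  rcases eq_or_lt_of_le ht.1 with h0t | h0t
  · simp only [defaultIntegral, ← h0t, intervalIntegral.integral_same]
    rw [(hC.1 (1 - π) hπ1).1]
    ring
  rcases eq_or_lt_of_le ht.2 with ht1 | ht1
  · simp only [defaultIntegral, ht1]
    rw [htrans.2, hint, (hC.1 (1 - π) hπ1).2]
    ring
  · obtain ⟨z₁, hz₁⟩ : ∃ z, distFun P Z z < t :=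
      (hF0.eventually (eventually_lt_nhds h0t)).exists
    obtain ⟨z₂, hz₂⟩ : ∃ z, t ≤ distFun P Z z :=
      (hF1.eventually (eventually_ge_nhds ht1)).exists
    have hmm : min z₁ z₂ ≤ z₂ := min_le_right _ _
    have htmem : t ∈ Set.Icc (distFun P Z (min z₁ z₂)) (distFun P Z z₂) :=
      ⟨((hFmono (min_le_left _ _)).trans hz₁.le), hz₂⟩
    obtain ⟨z, _, hFz⟩ := intermediate_value_Icc hmm hFcont.continuousOn htmem
    simp only [defaultIntegral, ← hFz]
    rw [htrans.1 z, hA z]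
end
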